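/- arXiv:2203.05302 — 6 statements merged into one kernel-verified Lean document; each statement's English description precedes it below -/
import Mathlib

section
/- Let u : ℝ × ℝ → ℝ be three times continuously differentiable in x and once in t, with m := u − u_{xx} such that m, m_x, m_t are continuous, and fix λ ∈ ℂ with λ ≠ 0. Define the 2×2 complex matrices U(x,t) := (1/2)·[[−1, λ·m],[−λ·m, 1]] and V(x,t) := [[λ^{−2} + (u² − u_x²)/2, −λ^{−1}(u − u_x) − λ(u² − u_x²)m/2],[λ^{−1}(u + u_x) + λ(u² − u_x²)m/2, −λ^{−2} − (u² − u_x²)/2]]. Then at every point (x,t), the zero-curvature equation ∂_t U − ∂_x V + U·V − V·U = 0 holds if and only if m_t(x,t) + ((u² − u_x²)·m)_x(x,t) = 0, i.e. if and only if the mCH equation holds at (x,t). -/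
open Matrix

set_option maxHeartbeats 2000000 in
/-- for the mCH Lax-pair matrices U, V, the zero-curvature equation
∂_t U − ∂_x V + U·V − V·U = 0 holds at (x,t) iff the mCH equation
m_t + ((u² − u_x²)·m)_x = 0 holds at (x,t). -/
theorem stmt_0
    (u ux uxx m mx mt : ℝ → ℝ → ℝ)
    (hu3 : ∀ t, ContDiff ℝ 3 (fun x => u x t))
    (hut : ∀ x, ContDiff ℝ 1 (fun t => u x t))
    (hux : ∀ x t, HasDerivAt (fun ξ => u ξ t) (ux x t) x)
    (huxx : ∀ x t, HasDerivAt (fun ξ => ux ξ t) (uxx x t) x)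
    (hm : ∀ x t, m x t = u x t - uxx x t)
    (hmx : ∀ x t, HasDerivAt (fun ξ => m ξ t) (mx x t) x)
    (hmt : ∀ x t, HasDerivAt (fun τ => m x τ) (mt x t) t)
    (hmc : Continuous fun p : ℝ × ℝ => m p.1 p.2)
    (hmxc : Continuous fun p : ℝ × ℝ => mx p.1 p.2)
    (hmtc : Continuous fun p : ℝ × ℝ => mt p.1 p.2)
    (lam : ℂ) (hlam : lam ≠ 0)
    (U V : ℝ → ℝ → Matrix (Fin 2) (Fin 2) ℂ)
    (hU : ∀ x t, U x t = (1/2 : ℂ) •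
      !![(-1 : ℂ), lam * (m x t : ℂ); -(lam * (m x t : ℂ)), 1])
    (hV : ∀ x t, V x t =
      !![1/lam^2 + ((u x t : ℂ)^2 - (ux x t : ℂ)^2)/2,
         -(1/lam) * ((u x t : ℂ) - (ux x t : ℂ))
           - lam * ((u x t : ℂ)^2 - (ux x t : ℂ)^2) * (m x t : ℂ)/2;
         (1/lam) * ((u x t : ℂ) + (ux x t : ℂ))
           + lam * ((u x t : ℂ)^2 - (ux x t : ℂ)^2) * (m x t : ℂ)/2,
         -(1/lam^2) - ((u x t : ℂ)^2 - (ux x t : ℂ)^2)/2]) :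
    ∀ x t,
      ((Matrix.of fun i j => deriv (fun τ => U x τ i j) t)
        - (Matrix.of fun i j => deriv (fun ξ => V ξ t i j) x)
        + U x t * V x t - V x t * U x t = 0)
      ↔ mt x t + deriv (fun ξ => ((u ξ t)^2 - (ux ξ t)^2) * m ξ t) x = 0 := by
  intro x t
  have haC : HasDerivAt (fun ξ => ((u ξ t : ℝ) : ℂ)) ((ux x t : ℂ)) x :=
    (hux x t).ofReal_comp
  have hbC : HasDerivAt (fun ξ => ((ux ξ t : ℝ) : ℂ)) ((uxx x t : ℂ)) x :=
    (huxx x t).ofReal_comp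
  have hmCx : HasDerivAt (fun ξ => ((m ξ t : ℝ) : ℂ)) ((mx x t : ℂ)) x :=
    (hmx x t).ofReal_comp
  have hmCt : HasDerivAt (fun τ => ((m x τ : ℝ) : ℂ)) ((mt x t : ℂ)) t :=
    (hmt x t).ofReal_comp
  have hEr : HasDerivAt (fun ξ => (u ξ t)^2 - (ux ξ t)^2)
      (2*u x t*ux x t - 2*ux x t*uxx x t) x := by
    simpa using ((hux x t).fun_pow 2).fun_sub ((huxx x t).fun_pow 2)
  have hE : HasDerivAt (fun ξ => ((u ξ t : ℂ))^2 - ((ux ξ t : ℂ))^2)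
      ((2*u x t*ux x t - 2*ux x t*uxx x t : ℝ) : ℂ) x := by
    have ef : (fun ξ => ((u ξ t : ℂ))^2 - ((ux ξ t : ℂ))^2)
        = fun ξ => (((u ξ t)^2 - (ux ξ t)^2 : ℝ) : ℂ) := by
      funext ξ; push_cast; ring
    rw [ef]; exact hEr.ofReal_comp
  have hD : HasDerivAt (fun ξ => ((u ξ t)^2 - (ux ξ t)^2) * m ξ t)
      ((2*u x t*ux x t - 2*ux x t*uxx x t) * m x t
        + ((u x t)^2 - (ux x t)^2) * mx x t) x := by
    simpa using (((hux x t).fun_pow 2).fun_sub ((huxx x t).fun_pow 2)).fun_mul (hmx x t)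
  have hDval : deriv (fun ξ => ((u ξ t)^2 - (ux ξ t)^2) * m ξ t) x
      = (2*u x t*ux x t - 2*ux x t*uxx x t) * m x t
        + ((u x t)^2 - (ux x t)^2) * mx x t := hD.deriv
  -- t-derivatives of U entries
  have dU00 : deriv (fun τ => U x τ 0 0) t = 0 := by
    have e : (fun τ => U x τ 0 0) = (fun _ => (2:ℂ)⁻¹ * (-1)) := by
      funext τ; simp [hU]
    rw [e]; exact deriv_const _ _
  have dU11 : deriv (fun τ => U x τ 1 1) t = 0 := by
    have e : (fun τ => U x τ 1 1) = (fun _ => (2:ℂ)⁻¹ * 1) := by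
      funext τ; simp [hU]
    rw [e]; exact deriv_const _ _
  have dU01 : deriv (fun τ => U x τ 0 1) t = (1/2:ℂ) * (lam * (mt x t : ℂ)) := by
    have e : (fun τ => U x τ 0 1) = (fun τ => (1/2:ℂ) * (lam * (m x τ : ℂ))) := by
      funext τ; simp [hU]
    rw [e]; exact ((hmCt.const_mul lam).const_mul (1/2:ℂ)).deriv
  have dU10 : deriv (fun τ => U x τ 1 0) t = (1/2:ℂ) * (-(lam * (mt x t : ℂ))) := by
    have e : (fun τ => U x τ 1 0) = (fun τ => (1/2:ℂ) * (-(lam * (m x τ : ℂ)))) := by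
      funext τ; simp [hU]
    rw [e]; exact (((hmCt.const_mul lam).neg).const_mul (1/2:ℂ)).deriv
  -- x-derivatives of V entries
  have dV00 : deriv (fun ξ => V ξ t 0 0) x
      = ((2*u x t*ux x t - 2*ux x t*uxx x t : ℝ) : ℂ) / 2 := by
    have e : (fun ξ => V ξ t 0 0)
        = (fun ξ => (((u ξ t : ℂ))^2 - ((ux ξ t : ℂ))^2)/2 + 1/lam^2) := by
      funext ξ; simp [hV]; ring
    rw [e]; exact ((hE.div_const 2).add_const _).deriv
  have dV11 : deriv (fun ξ => V ξ t 1 1) x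
      = -(((2*u x t*ux x t - 2*ux x t*uxx x t : ℝ) : ℂ) / 2) := by
    have e : (fun ξ => V ξ t 1 1)
        = (fun ξ => -((((u ξ t : ℂ))^2 - ((ux ξ t : ℂ))^2)/2) + (-(1/lam^2))) := by
      funext ξ; simp [hV]; ring
    rw [e]; exact (((hE.div_const 2).neg).add_const _).deriv
  have dV01 : deriv (fun ξ => V ξ t 0 1) x
      = -(1/lam) * ((ux x t:ℂ) - (uxx x t:ℂ))
        - lam/2 * (((2*u x t*ux x t - 2*ux x t*uxx x t : ℝ) : ℂ) * (m x t:ℂ)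
            + (((u x t : ℂ))^2 - ((ux x t : ℂ))^2) * (mx x t:ℂ)) := by
    have e : (fun ξ => V ξ t 0 1)
        = (fun ξ => -(1/lam) * ((u ξ t : ℂ) - (ux ξ t : ℂ))
            - lam/2 * ((((u ξ t : ℂ))^2 - ((ux ξ t : ℂ))^2) * (m ξ t : ℂ))) := by
      funext ξ; simp [hV]; ring
    rw [e]
    exact (((haC.sub hbC).const_mul (-(1/lam))).sub
      ((hE.mul hmCx).const_mul (lam/2))).deriv
  have dV10 : deriv (fun ξ => V ξ t 1 0) x
      = (1/lam) * ((ux x t:ℂ) + (uxx x t:ℂ))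
        + lam/2 * (((2*u x t*ux x t - 2*ux x t*uxx x t : ℝ) : ℂ) * (m x t:ℂ)
            + (((u x t : ℂ))^2 - ((ux x t : ℂ))^2) * (mx x t:ℂ)) := by
    have e : (fun ξ => V ξ t 1 0)
        = (fun ξ => (1/lam) * ((u ξ t : ℂ) + (ux ξ t : ℂ))
            + lam/2 * ((((u ξ t : ℂ))^2 - ((ux ξ t : ℂ))^2) * (m ξ t : ℂ))) := by
      funext ξ; simp [hV]; ring
    rw [e]
    exact (((haC.add hbC).const_mul (1/lam)).add
      ((hE.mul hmCx).const_mul (lam/2))).deriv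
  set K : ℝ := mt x t + deriv (fun ξ => ((u ξ t)^2 - (ux ξ t)^2) * m ξ t) x with hK
  have hKC : (K : ℂ) = (mt x t : ℂ)
      + (((2*u x t*ux x t - 2*ux x t*uxx x t : ℝ) : ℂ) * (m x t:ℂ)
        + (((u x t : ℂ))^2 - ((ux x t : ℂ))^2) * (mx x t:ℂ)) := by
    rw [hK, hDval]; push_cast; ring
  have key : (Matrix.of fun i j => deriv (fun τ => U x τ i j) t)
        - (Matrix.of fun i j => deriv (fun ξ => V ξ t i j) x)
        + U x t * V x t - V x t * U x t
      = !![0, lam * (K:ℂ)/2; -(lam * (K:ℂ)/2), 0] := by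
    ext i j
    fin_cases i <;> fin_cases j
    · simp only [Matrix.sub_apply, Matrix.add_apply, Matrix.of_apply,
        Fin.zero_eta, Fin.mk_one, Fin.isValue]
      rw [dU00, dV00]
      simp only [hU, hV, hKC]
      simp only [Matrix.mul_apply, Fin.sum_univ_two, Matrix.smul_apply,
        smul_eq_mul, Matrix.of_apply, Matrix.cons_val', Matrix.cons_val_zero,
        Matrix.cons_val_one, Matrix.head_cons, Matrix.empty_val',
        Matrix.cons_val_fin_one, Matrix.head_fin_const, Fin.isValue,
        Fin.zero_eta, Fin.mk_one, Matrix.vecHead, Matrix.vecTail]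
      simp only [hm]
      field_simp [hlam]
      ring_nf
      field_simp [hlam]
      push_cast
      ring
    · simp only [Matrix.sub_apply, Matrix.add_apply, Matrix.of_apply,
        Fin.zero_eta, Fin.mk_one, Fin.isValue]
      rw [dU01, dV01]
      simp only [hU, hV, hKC]
      simp only [Matrix.mul_apply, Fin.sum_univ_two, Matrix.smul_apply,
        smul_eq_mul, Matrix.of_apply, Matrix.cons_val', Matrix.cons_val_zero,
        Matrix.cons_val_one, Matrix.head_cons, Matrix.empty_val',
        Matrix.cons_val_fin_one, Matrix.head_fin_const, Fin.isValue,
        Fin.zero_eta, Fin.mk_one, Matrix.vecHead, Matrix.vecTail]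
      simp only [hm]
      field_simp [hlam]
      ring_nf
      field_simp [hlam]
      push_cast
      ring
    · simp only [Matrix.sub_apply, Matrix.add_apply, Matrix.of_apply,
        Fin.zero_eta, Fin.mk_one, Fin.isValue]
      rw [dU10, dV10]
      simp only [hU, hV, hKC]
      simp only [Matrix.mul_apply, Fin.sum_univ_two, Matrix.smul_apply,
        smul_eq_mul, Matrix.of_apply, Matrix.cons_val', Matrix.cons_val_zero,
        Matrix.cons_val_one, Matrix.head_cons, Matrix.empty_val',
        Matrix.cons_val_fin_one, Matrix.head_fin_const, Fin.isValue,
        Fin.zero_eta, Fin.mk_one, Matrix.vecHead, Matrix.vecTail]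
      simp only [hm]
      field_simp [hlam]
      ring_nf
      field_simp [hlam]
      ring_nf
      field_simp [hlam]
      push_cast
      ring
    · simp only [Matrix.sub_apply, Matrix.add_apply, Matrix.of_apply,
        Fin.zero_eta, Fin.mk_one, Fin.isValue]
      rw [dU11, dV11]
      simp only [hU, hV, hKC]
      simp only [Matrix.mul_apply, Fin.sum_univ_two, Matrix.smul_apply,
        smul_eq_mul, Matrix.of_apply, Matrix.cons_val', Matrix.cons_val_zero,
        Matrix.cons_val_one, Matrix.head_cons, Matrix.empty_val',
        Matrix.cons_val_fin_one, Matrix.head_fin_const, Fin.isValue,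
        Fin.zero_eta, Fin.mk_one, Matrix.vecHead, Matrix.vecTail]
      simp only [hm]
      field_simp [hlam]
      ring_nf
      field_simp [hlam]
      push_cast
      ring
  rw [key]
  constructor
  · intro h
    have h01 : (!![0, lam * (K:ℂ)/2; -(lam * (K:ℂ)/2), 0] : Matrix (Fin 2) (Fin 2) ℂ) 0 1
        = (0 : Matrix (Fin 2) (Fin 2) ℂ) 0 1 := by rw [h]
    simp [hlam] at h01
    exact_mod_cast h01
  · intro h
    have h0 : (K : ℂ) = 0 := by exact_mod_cast h
    rw [h0]
    ext i j
    fin_cases i <;> fin_cases j <;> simp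
end

section
/- For every A > 0 and every λ ∈ ℂ ∖ Σ_A one has: (i) det D_A(λ) = 1; (ii) D_A(λ)·E_A(λ) = I, so that E_A(λ) is the inverse matrix of D_A(λ); and (iii) D_A(λ)·[[−1, λA],[−λA, 1]]·E_A(λ) = −i·A·k_A(λ)·σ₃, i.e. D_A diagonalizes the matrix [[−1, λA],[−λA, 1]] with eigenvalue matrix −i·A·k_A(λ)·σ₃. -/
open Complex Matrix MeasureTheory Filter

noncomputable def csqrt (z : ℂ) : ℂ := z ^ (1/2 : ℂ)

noncomputable def sB (w : ℂ) : ℂ := Complex.I * csqrt (-w)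

def SigmaSet (A : ℝ) : Set ℂ := Complex.ofReal '' (Set.Iic (-(1/A)) ∪ Set.Ici (1/A))

noncomputable def kA (A : ℝ) (l : ℂ) : ℂ := Complex.I * csqrt (1/(A:ℂ)^2 - l^2)

noncomputable def DA (A : ℝ) (l : ℂ) : Matrix (Fin 2) (Fin 2) ℂ :=
  (((Real.sqrt 2 : ℝ) : ℂ)⁻¹ * sB (1/(Complex.I * (A:ℂ) * kA A l) - 1)) •
    !![l * (A:ℂ) / (1 - Complex.I * (A:ℂ) * kA A l), -1;
       -1, l * (A:ℂ) / (1 - Complex.I * (A:ℂ) * kA A l)]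

noncomputable def EA (A : ℝ) (l : ℂ) : Matrix (Fin 2) (Fin 2) ℂ :=
  (((Real.sqrt 2 : ℝ) : ℂ)⁻¹ * sB (1/(Complex.I * (A:ℂ) * kA A l) - 1)) •
    !![l * (A:ℂ) / (1 - Complex.I * (A:ℂ) * kA A l), 1;
       1, l * (A:ℂ) / (1 - Complex.I * (A:ℂ) * kA A l)]

def sigma1 : Matrix (Fin 2) (Fin 2) ℂ := !![0, 1; 1, 0]
def sigma2 : Matrix (Fin 2) (Fin 2) ℂ := !![0, -Complex.I; Complex.I, 0]
def sigma3 : Matrix (Fin 2) (Fin 2) ℂ := !![1, 0; 0, -1]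

lemma csqrt_sq (u : ℂ) : csqrt u ^ 2 = u := by
  rcases eq_or_ne u 0 with h | h
  · simp [csqrt, h, Complex.zero_cpow (by norm_num : (1/2:ℂ) ≠ 0)]
  · rw [csqrt, sq, ← Complex.cpow_add _ _ h]; norm_num

lemma csqrt_ofReal_pos {x : ℝ} (hx : 0 < x) : csqrt (x:ℂ) = (Real.sqrt x : ℂ) := by
  rw [csqrt, Real.sqrt_eq_rpow, Complex.ofReal_cpow hx.le]; norm_num

lemma csqrt_ne_zero {u : ℂ} (hu : u ≠ 0) : csqrt u ≠ 0 := by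
  intro h; rw [csqrt, Complex.cpow_eq_zero_iff] at h; exact hu h.1

lemma sB_sq (w : ℂ) : sB w ^ 2 = w := by
  rw [sB, mul_pow, Complex.I_sq, csqrt_sq]; ring

/-- det D_A = 1, E_A is the inverse of D_A, and D_A diagonalizes
[[−1, λA],[−λA, 1]] with eigenvalue matrix −i·A·k_A(λ)·σ₃. -/
theorem stmt_1 (A : ℝ) (hA : 0 < A) (l : ℂ) (hl : l ∉ SigmaSet A) :
    (DA A l).det = 1 ∧
    DA A l * EA A l = 1 ∧
    DA A l * !![-1, l * (A:ℂ); -(l * (A:ℂ)), 1] * EA A l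
      = (-(Complex.I) * (A:ℂ) * kA A l) • sigma3 := by
  have hA0 : (A:ℂ) ≠ 0 := by exact_mod_cast hA.ne'
  set u : ℂ := 1/(A:ℂ)^2 - l^2 with hu
  have hu0 : u ≠ 0 := by
    intro h
    have h2 : (l - 1/(A:ℂ)) * (l + 1/(A:ℂ)) = 0 := by
      have : l^2 = 1/(A:ℂ)^2 := by linear_combination -h
      linear_combination this
    rcases mul_eq_zero.mp h2 with h3 | h3
    · exact hl ⟨1/A, Or.inr (Set.mem_Ici.mpr le_rfl), by push_cast; linear_combination -h3⟩
    · exact hl ⟨-(1/A), Or.inl (Set.mem_Iic.mpr le_rfl), by push_cast; linear_combination -h3⟩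
  set z : ℂ := Complex.I * (A:ℂ) * kA A l with hzdef
  have hz2 : z^2 = 1 - (l*(A:ℂ))^2 := by
    have : (kA A l)^2 = -u := by rw [kA, mul_pow, Complex.I_sq, csqrt_sq]; ring
    rw [hzdef, mul_pow, mul_pow, Complex.I_sq, this, hu]
    field_simp
  have hk0 : kA A l ≠ 0 :=
    mul_ne_zero Complex.I_ne_zero (csqrt_ne_zero hu0)
  have hz0 : z ≠ 0 := mul_ne_zero (mul_ne_zero Complex.I_ne_zero hA0) hk0
  have hz1 : (1:ℂ) - z ≠ 0 := by
    intro h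
    have hzeq : z = 1 := by linear_combination -h
    have hl0 : l = 0 := by
      have : (l*(A:ℂ))^2 = 0 := by linear_combination hz2 - (z+1) * hzeq
      have := pow_eq_zero_iff (n := 2) (by norm_num) |>.mp this
      exact (mul_eq_zero.mp this).resolve_right hA0
    rw [hl0] at hzdef
    have hcast : 1/(A:ℂ)^2 - (0:ℂ)^2 = ((1/A^2 : ℝ) : ℂ) := by push_cast; ring
    have hs : csqrt (1/(A:ℂ)^2 - (0:ℂ)^2) = ((1/A : ℝ) : ℂ) := by
      rw [hcast, csqrt_ofReal_pos (by positivity)]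
      rw [show (1/A^2 : ℝ) = (1/A)^2 by ring, Real.sqrt_sq (by positivity)]
    have hzm : z = -1 := by
      rw [hzdef, kA, hs]
      push_cast
      rw [show Complex.I * (A:ℂ) * (Complex.I * (1/(A:ℂ))) =
            Complex.I^2 * ((A:ℂ) * (1/(A:ℂ))) from by ring, Complex.I_sq,
          mul_one_div, div_self hA0]
      ring
    rw [hzm] at hzeq
    norm_num at hzeq
  set c : ℂ := ((Real.sqrt 2 : ℝ) : ℂ)⁻¹ * sB (1/z - 1) with hcdef
  have hc2 : 2 * z * c^2 = 1 - z := by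
    rw [hcdef, mul_pow, sB_sq]
    have h2 : (((Real.sqrt 2 : ℝ) : ℂ)⁻¹)^2 = 1/2 := by
      rw [← Complex.ofReal_inv, ← Complex.ofReal_pow]
      norm_num [Real.sq_sqrt]
    rw [h2]
    field_simp
  set a : ℂ := l * (A:ℂ) with hadef
  set m : ℂ := a / (1 - z) with hmdef
  have hDA : DA A l = c • !![m, -1; -1, m] := rfl
  have hEA : EA A l = c • !![m, 1; 1, m] := rfl
  refine ⟨?_, ?_, ?_⟩
  · rw [hDA, Matrix.det_smul, Matrix.det_fin_two_of]
    simp only [Fintype.card_fin]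
    rw [hmdef]
    field_simp
    linear_combination c^2 * hz2 + (1-z) * hc2
  · rw [hDA, hEA, Matrix.smul_mul, Matrix.mul_smul, smul_smul]
    ext i j
    fin_cases i <;> fin_cases j <;>
      simp [Matrix.mul_apply, Fin.sum_univ_two, Matrix.one_apply] <;>
      · rw [hmdef]
        field_simp
        linear_combination c^2 * hz2 + (1-z) * hc2
  · have hRHS : (-(Complex.I) * (A:ℂ) * kA A l) = -z := by rw [hzdef]; ring
    rw [hRHS, hDA, hEA, Matrix.smul_mul, Matrix.smul_mul, Matrix.mul_smul, smul_smul]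
    clear_value m a c z u
    ext i j
    fin_cases i <;> fin_cases j <;>
      simp [Matrix.mul_apply, Fin.sum_univ_two, sigma3]
    · rw [hmdef]; field_simp
      linear_combination (c^2*(1-2*z)) * hz2 - (z*(1-z)) * hc2
    · refine Or.inr ?_
      rw [hmdef]; field_simp
      linear_combination a * hz2
    · refine Or.inr ?_
      rw [hmdef]; field_simp
      linear_combination (-a) * hz2
    · rw [hmdef]; field_simp
      linear_combination (-(c^2*(1-2*z))) * hz2 + (z*(1-z)) * hc2
end

section
/- For every A > 0 and every λ ∈ ℂ ∖ Σ_A one has conj(E_A(λ̄)) = −E_A(λ), where λ̄ is the complex conjugate of λ and conj denotes entrywise complex conjugation of the matrix. -/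
open Complex Matrix MeasureTheory Filter

lemma csqrt_conj {z : ℂ} (hz : z.arg ≠ Real.pi) :
    (starRingEnd ℂ) (csqrt z) = csqrt ((starRingEnd ℂ) z) := by
  have h := Complex.conj_cpow z (1/2 : ℂ) hz
  simp only [map_div₀, _root_.map_one, map_ofNat] at h
  rw [csqrt, csqrt, h]

lemma re_csqrt_nonneg (z : ℂ) : 0 ≤ (csqrt z).re := by
  by_cases hz : z = 0
  · simp [csqrt, hz, Complex.zero_cpow (by norm_num : (1/2:ℂ) ≠ 0)]
  · rw [csqrt, Complex.cpow_def_of_ne_zero hz, Complex.exp_re]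
    apply mul_nonneg (Real.exp_pos _).le
    apply Real.cos_nonneg_of_mem_Icc
    have h1 := Complex.neg_pi_lt_arg z
    have h2 := Complex.arg_le_pi z
    have him : (Complex.log z * (1/2)).im = z.arg / 2 := by
      simp [Complex.mul_im, Complex.log_im]
      ring
    rw [him]
    constructor <;> [linarith; linarith]

lemma arg_conj_ne_pi {z : ℂ} (hz : z.arg ≠ Real.pi) : ((starRingEnd ℂ) z).arg ≠ Real.pi := by
  rw [Complex.arg_conj, if_neg hz]
  intro h
  have := Complex.neg_pi_lt_arg z
  linarith [neg_eq_iff_eq_neg.mp h]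

lemma arg_u_ne_pi {A : ℝ} (hA : 0 < A) {l : ℂ} (hl : l ∉ SigmaSet A) :
    (1/(A:ℂ)^2 - l^2).arg ≠ Real.pi := by
  intro h
  rw [Complex.arg_eq_pi_iff] at h
  obtain ⟨hre, him⟩ := h
  have hcast : (1/(A:ℂ)^2) = ((1/A^2 : ℝ) : ℂ) := by push_cast; ring
  rw [hcast] at hre him
  set x := l.re with hx
  set y := l.im with hy
  have hre' : 1/A^2 - (x*x - y*y) < 0 := by
    simpa [Complex.sub_re, Complex.ofReal_re, pow_two, Complex.mul_re] using hre
  have him' : x*y + y*x = 0 := by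
    have := him
    simp [Complex.sub_im, Complex.ofReal_im, pow_two, Complex.mul_im] at this
    linarith [this]
  have hA2 : 0 < 1/A^2 := by positivity
  have hy0 : y = 0 := by
    rcases mul_eq_zero.mp (by linarith : x*y = 0) with hx0 | hy0
    · nlinarith
    · exact hy0
  have hx2 : (1/A)^2 < x^2 := by
    have : 1/A^2 = (1/A)^2 := by ring
    nlinarith
  have hmem : x ∈ Set.Iic (-(1/A)) ∪ Set.Ici (1/A) := by
    rcases le_or_gt 0 x with hxs | hxs
    · right
      have : 1/A < x := by nlinarith [one_div_pos.mpr hA]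
      exact le_of_lt this
    · left
      have : x < -(1/A) := by nlinarith [one_div_pos.mpr hA]
      exact le_of_lt this
  refine hl ⟨x, hmem, Complex.ext ?_ ?_⟩
  · simp [hx]
  · simpa using hy0.symm

lemma kA_conj {A : ℝ} (hA : 0 < A) {l : ℂ} (hl : l ∉ SigmaSet A) :
    (starRingEnd ℂ) (kA A ((starRingEnd ℂ) l)) = - kA A l := by
  have hu : (1/(A:ℂ)^2 - ((starRingEnd ℂ) l)^2) = (starRingEnd ℂ) (1/(A:ℂ)^2 - l^2) := by
    simp [map_sub, map_pow, map_div₀, Complex.conj_ofReal]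
  rw [kA, hu, _root_.map_mul, Complex.conj_I,
    csqrt_conj (arg_conj_ne_pi (arg_u_ne_pi hA hl)), Complex.conj_conj, kA]
  ring

/-- conj(E_A(conj λ)) = −E_A(λ) (entrywise conjugation). -/
theorem stmt_8 (A : ℝ) (hA : 0 < A) (l : ℂ) (hl : l ∉ SigmaSet A) :
    (EA A ((starRingEnd ℂ) l)).map (starRingEnd ℂ) = -(EA A l) := by
  have hk := kA_conj hA hl
  have hc : (starRingEnd ℂ) (Complex.I * (A:ℂ) * kA A ((starRingEnd ℂ) l))
      = Complex.I * (A:ℂ) * kA A l := by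
    rw [_root_.map_mul, _root_.map_mul, hk, Complex.conj_I, Complex.conj_ofReal]; ring
  have hentry : (starRingEnd ℂ) ((starRingEnd ℂ) l * (A:ℂ) /
        (1 - Complex.I * (A:ℂ) * kA A ((starRingEnd ℂ) l)))
      = l * (A:ℂ) / (1 - Complex.I * (A:ℂ) * kA A l) := by
    rw [map_div₀, _root_.map_mul, map_sub, hc, Complex.conj_conj, Complex.conj_ofReal, _root_.map_one]
  have hw : (starRingEnd ℂ) (1/(Complex.I * (A:ℂ) * kA A ((starRingEnd ℂ) l)) - 1)
      = 1/(Complex.I * (A:ℂ) * kA A l) - 1 := by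
    rw [map_sub, map_div₀, hc, _root_.map_one]
  -- the key arg condition for sB
  have hIAk : Complex.I * (A:ℂ) * kA A l = -((A:ℂ) * csqrt (1/(A:ℂ)^2 - l^2)) := by
    rw [kA]
    have : Complex.I * (A:ℂ) * (Complex.I * csqrt (1/(A:ℂ)^2 - l^2))
        = Complex.I * Complex.I * ((A:ℂ) * csqrt (1/(A:ℂ)^2 - l^2)) := by ring
    rw [this, Complex.I_mul_I]
    ring
  have hargw : (-(1/(Complex.I * (A:ℂ) * kA A l) - 1)).arg ≠ Real.pi := by
    set s := csqrt (1/(A:ℂ)^2 - l^2) with hs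
    have hrw : -(1/(Complex.I * (A:ℂ) * kA A l) - 1) = 1 + ((A:ℂ)*s)⁻¹ := by
      rw [hIAk]
      ring
    rw [hrw]
    intro h
    rw [Complex.arg_eq_pi_iff] at h
    have hre : 0 ≤ (((A:ℂ)*s)⁻¹).re := by
      rw [Complex.inv_re]
      apply div_nonneg _ (Complex.normSq_nonneg _)
      have : ((A:ℂ)*s).re = A * s.re := by
        simp [Complex.mul_re, Complex.ofReal_re, Complex.ofReal_im]
      rw [this]
      exact mul_nonneg hA.le (re_csqrt_nonneg _)
    have : (1 + ((A:ℂ)*s)⁻¹).re = 1 + (((A:ℂ)*s)⁻¹).re := by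
      simp [Complex.add_re]
    linarith [h.1, this ▸ h.1]
  have hsB : (starRingEnd ℂ) (sB (1/(Complex.I * (A:ℂ) * kA A ((starRingEnd ℂ) l)) - 1))
      = - sB (1/(Complex.I * (A:ℂ) * kA A l) - 1) := by
    have hw' : -(1/(Complex.I * (A:ℂ) * kA A ((starRingEnd ℂ) l)) - 1)
        = (starRingEnd ℂ) (-(1/(Complex.I * (A:ℂ) * kA A l) - 1)) := by
      rw [map_neg, ← hw, Complex.conj_conj]
    rw [sB, _root_.map_mul, Complex.conj_I, hw',
      csqrt_conj (arg_conj_ne_pi hargw), Complex.conj_conj, sB]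
    ring
  have hscal : (starRingEnd ℂ) ((((Real.sqrt 2 : ℝ) : ℂ))⁻¹ *
        sB (1/(Complex.I * (A:ℂ) * kA A ((starRingEnd ℂ) l)) - 1))
      = -((((Real.sqrt 2 : ℝ) : ℂ))⁻¹ * sB (1/(Complex.I * (A:ℂ) * kA A l) - 1)) := by
    rw [_root_.map_mul, map_inv₀, Complex.conj_ofReal, hsB]; ring
  ext i j
  fin_cases i <;> fin_cases j <;>
    simp only [EA, Matrix.map_apply, Matrix.smul_apply, Matrix.neg_apply, smul_eq_mul,
      Fin.zero_eta, Fin.mk_one, Fin.isValue, Matrix.of_apply, Matrix.cons_val',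
      Matrix.cons_val_zero, Matrix.cons_val_one, Matrix.head_cons, Matrix.empty_val',
      Matrix.cons_val_fin_one, Matrix.head_fin_const, _root_.map_mul, map_inv₀,
      Complex.conj_ofReal, hsB, hentry, _root_.map_one] <;> ring
end

section
/- Let A > 0. Define the fourth-root branches ν⁺_A(λ) := e^{iπ/4}·(1/A − λ)^{1/4} (principal fourth root; branch cut [1/A, ∞), ν⁺_A(0) = e^{iπ/4}/A^{1/4}) and ν⁻_A(λ) := (λ + 1/A)^{1/4} (principal fourth root; branch cut (−∞, −1/A], ν⁻_A(0) = 1/A^{1/4}). Then E_A has singularities of order exactly 1/4 at the branch points ±1/A, with: (i) E_A(λ) = (e^{3πi/4}/(√2·(2A)^{1/4}·ν⁺_A(λ)))·[[1,1],[1,1]] + O(|λ − 1/A|^{1/4}) as λ → 1/A within ℂ ∖ Σ_A; and (ii) E_A(λ) = (i/(√2·(2A)^{1/4}·ν⁻_A(λ)))·[[−1,1],[1,−1]] + O(|λ + 1/A|^{1/4}) as λ → −1/A within ℂ ∖ Σ_A. -/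
open Complex Matrix MeasureTheory Filter

attribute [local instance] Matrix.normedAddCommGroup Matrix.normedSpace

/-- ν⁺: fourth-root branch with branch cut [1/A, ∞), ν⁺(0) = e^{iπ/4}/A^{1/4}. -/
noncomputable def nuPlus (A : ℝ) (l : ℂ) : ℂ :=
  Complex.exp ((Real.pi : ℂ) * Complex.I / 4) * ((1/(A:ℂ) - l) ^ (1/4 : ℂ))

/-- ν⁻: fourth-root branch with branch cut (−∞, −1/A], ν⁻(0) = 1/A^{1/4}. -/
noncomputable def nuMinus (A : ℝ) (l : ℂ) : ℂ := (l + 1/(A:ℂ)) ^ (1/4 : ℂ)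


section Aux

open Complex Filter Set

lemma mulCpow {x y : ℂ} (hx : x ≠ 0) (hy : y ≠ 0)
    (h : Complex.arg x + Complex.arg y ∈ Set.Ioc (-Real.pi) Real.pi) (w : ℂ) :
    (x * y) ^ w = x ^ w * y ^ w := by
  rw [Complex.cpow_def_of_ne_zero (mul_ne_zero hx hy),
    Complex.cpow_def_of_ne_zero hx, Complex.cpow_def_of_ne_zero hy,
    Complex.log_mul hx hy h, add_mul, Complex.exp_add]

lemma sq_csqrt (x : ℂ) : csqrt x ^ 2 = x := by
  have : (1/2 : ℂ) = ((2:ℕ) : ℂ)⁻¹ := by norm_num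
  rw [csqrt, this, Complex.cpow_nat_inv_pow x (by norm_num)]

lemma pow4_quarter (x : ℂ) : (x ^ (1/4 : ℂ)) ^ (4:ℕ) = x := by
  have : (1/4 : ℂ) = ((4:ℕ) : ℂ)⁻¹ := by norm_num
  rw [this, Complex.cpow_nat_inv_pow x (by norm_num)]

lemma csqrt_csqrt (x : ℂ) : csqrt (csqrt x) = x ^ (1/4 : ℂ) := by
  have h := Complex.cpow_mul (x := x) (z := (1/2 : ℂ)) (y := (1/2 : ℂ)) ?_ ?_
  · rw [csqrt, csqrt, ← h]; norm_num
  · simp only [Complex.mul_im, Complex.log_im]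
    have h1 := Complex.neg_pi_lt_arg x
    have h2 := Complex.arg_le_pi x
    simp only [Complex.log_re, Complex.log_im]
    norm_num
    nlinarith [Real.pi_pos]
  · simp only [Complex.mul_im, Complex.log_im, Complex.log_re]
    have h2 := Complex.arg_le_pi x
    norm_num
    nlinarith [Real.pi_pos]

lemma re_csqrt_pos {x : ℂ} (hx : x ∈ Complex.slitPlane) : 0 < (csqrt x).re := by
  have hx0 : x ≠ 0 := Complex.slitPlane_ne_zero hx
  rw [csqrt, Complex.cpow_def_of_ne_zero hx0, Complex.exp_re]
  have harg : Complex.arg x ≠ Real.pi := Complex.slitPlane_arg_ne_pi hx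
  have h1 := Complex.neg_pi_lt_arg x
  have h2 := (Complex.arg_le_pi x).lt_of_ne harg
  have him : (Complex.log x * (1/2)).im = Complex.arg x / 2 := by
    simp [Complex.log_im]; ring
  rw [him]
  exact mul_pos (Real.exp_pos _)
    (Real.cos_pos_of_mem_Ioo ⟨by linarith, by linarith⟩)

lemma absCpowReal (x : ℂ) (r : ℝ) (hr : r ≠ 0) :
    ‖x ^ (r:ℂ)‖ = ‖x‖ ^ r := by
  rcases eq_or_ne x 0 with rfl | hx
  · rw [Complex.zero_cpow (Complex.ofReal_ne_zero.mpr hr), norm_zero, Real.zero_rpow hr]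
  · rw [Complex.norm_cpow_of_ne_zero hx]
    simp

noncomputable def ee (A : ℝ) (l : ℂ) : ℂ := 1/(A:ℂ) - l
noncomputable def mm (A : ℝ) (l : ℂ) : ℂ := 1/(A:ℂ) + l
noncomputable def ett (A : ℝ) (l : ℂ) : ℂ := (ee A l) ^ (1/4 : ℂ)
noncomputable def gam (A : ℝ) (l : ℂ) : ℂ := ((A:ℂ)^2 * mm A l) ^ (1/4 : ℂ)
noncomputable def qq (A : ℝ) (l : ℂ) : ℂ := (A:ℂ) * csqrt (ee A l * mm A l)
noncomputable def ssf (A : ℝ) (l : ℂ) : ℂ := csqrt (1 + qq A l)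
noncomputable def aA (A : ℝ) : ℂ := (((2*A) ^ ((1:ℝ)/4) : ℝ) : ℂ)

def UU (A : ℝ) : Set ℂ := {l | l ∉ SigmaSet A ∧ ‖l - 1/(A:ℂ)‖ < 1/(2*A)}

variable {A : ℝ} {l : ℂ}

lemma not_mem_sigma_real (hA : 0 < A) (h : l ∉ SigmaSet A) (him : l.im = 0) :
    -(1/A) < l.re ∧ l.re < 1/A := by
  have hl : l = (l.re : ℝ) := Complex.ext rfl (by simp [him])
  by_contra hc
  apply h
  refine ⟨l.re, ?_, hl.symm⟩
  rcases not_and_or.mp hc with h1 | h1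
  · exact Or.inl (by simpa using not_lt.mp h1)
  · exact Or.inr (by simpa using not_lt.mp h1)

lemma ofReal_onediv (A : ℝ) : (1/(A:ℂ)) = ((1/A : ℝ) : ℂ) := by push_cast; ring

lemma re_bound (hU : l ∈ UU A) : |l.re - 1/A| < 1/(2*A) := by
  have h1 := hU.2
  have h2 : (l - 1/(A:ℂ)).re = l.re - 1/A := by
    rw [ofReal_onediv]; simp
  have h3 := (Complex.abs_re_le_norm (l - 1/(A:ℂ))).trans_lt h1
  rwa [h2] at h3

lemma re_gt (hA : 0 < A) (hU : l ∈ UU A) : 1/(2*A) < l.re := by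
  have := abs_lt.mp (re_bound hU)
  have hAA : 1/A - 1/(2*A) = 1/(2*A) := by field_simp; ring
  linarith [this.1]

lemma ee_im : (ee A l).im = -l.im := by simp [ee, ofReal_onediv A]
lemma mm_im : (mm A l).im = l.im := by simp [mm, ofReal_onediv A]
lemma ee_re : (ee A l).re = 1/A - l.re := by simp [ee, ofReal_onediv A]
lemma mm_re : (mm A l).re = 1/A + l.re := by simp [mm, ofReal_onediv A]

lemma mm_re_pos (hA : 0 < A) (hU : l ∈ UU A) : 0 < (mm A l).re := by
  rw [mm_re]
  have h1 : 0 < 1/(2*A) := by positivity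
  have h2 : 0 < 1/A := by positivity
  linarith [re_gt hA hU]

lemma mm_ne (hA : 0 < A) (hU : l ∈ UU A) : mm A l ≠ 0 :=
  fun h => by simpa [h] using (mm_re_pos hA hU)

lemma ee_slit (hA : 0 < A) (hU : l ∈ UU A) : ee A l ∈ Complex.slitPlane := by
  rcases eq_or_ne l.im 0 with him | him
  · left
    rw [ee_re]
    have := (not_mem_sigma_real hA hU.1 him).2
    linarith
  · right; rw [ee_im]; simpa using him

lemma ee_ne (hA : 0 < A) (hU : l ∈ UU A) : ee A l ≠ 0 :=
  Complex.slitPlane_ne_zero (ee_slit hA hU)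

lemma em_ne (hA : 0 < A) (hU : l ∈ UU A) : ee A l * mm A l ≠ 0 :=
  mul_ne_zero (ee_ne hA hU) (mm_ne hA hU)

lemma em_slit (hA : 0 < A) (hU : l ∈ UU A) : ee A l * mm A l ∈ Complex.slitPlane := by
  rcases eq_or_ne l.im 0 with him | him
  · left
    have he : 0 < (ee A l).re := by
      rw [ee_re]; linarith [(not_mem_sigma_real hA hU.1 him).2]
    have hm := mm_re_pos hA hU
    rw [Complex.mul_re, ee_im, mm_im, him]
    simpa using mul_pos he hm
  · right
    rw [Complex.mul_im, ee_im, mm_im, ee_re, mm_re]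
    have h1 : 0 < 1/(2*A) := by positivity
    have hre := re_gt hA hU
    intro hc
    apply him
    have : (1/A - l.re) * l.im + -l.im * (1/A + l.re) = -l.im * (2*l.re) := by ring
    rw [this] at hc
    rcases mul_eq_zero.mp hc with h | h
    · linarith [neg_eq_zero.mp h]
    · nlinarith

lemma arg_add_mem (hA : 0 < A) (hU : l ∈ UU A) :
    Complex.arg (mm A l) + Complex.arg (ee A l) ∈ Set.Ioc (-Real.pi) Real.pi := by
  have hpi := Real.pi_pos
  have hane : ee A l ≠ 0 := ee_ne hA hU
  have hmarg : |Complex.arg (mm A l)| < Real.pi/2 :=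
    Complex.abs_arg_lt_pi_div_two_iff.mpr (Or.inl (mm_re_pos hA hU))
  have hm2 := abs_lt.mp hmarg
  rcases lt_trichotomy l.im 0 with him | him | him
  · -- e.im > 0 : 0 ≤ arg e ≤ π ; m.im < 0 : arg m < 0
    have he1 : 0 ≤ Complex.arg (ee A l) := Complex.arg_nonneg_iff.mpr (by rw [ee_im]; linarith)
    have he2 := Complex.arg_le_pi (ee A l)
    have hm1 : Complex.arg (mm A l) < 0 := Complex.arg_neg_iff.mpr (by rw [mm_im]; exact him)
    constructor <;> [linarith; linarith]
  · -- real case: both args 0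
    have hee : Complex.arg (ee A l) = 0 :=
      Complex.arg_eq_zero_iff.mpr ⟨by rw [ee_re]; linarith [(not_mem_sigma_real hA hU.1 him).2], by rw [ee_im, him, neg_zero]⟩
    have hmm : Complex.arg (mm A l) = 0 :=
      Complex.arg_eq_zero_iff.mpr ⟨(mm_re_pos hA hU).le, by rw [mm_im, him]⟩
    rw [hee, hmm]
    constructor <;> simp [hpi] <;> linarith
  · -- e.im < 0 : -π < arg e < 0 ; m.im > 0 : 0 ≤ arg m
    have he1 : Complex.arg (ee A l) < 0 := Complex.arg_neg_iff.mpr (by rw [ee_im]; linarith)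
    have he2 := Complex.neg_pi_lt_arg (ee A l)
    have hm1 : 0 ≤ Complex.arg (mm A l) := Complex.arg_nonneg_iff.mpr (by rw [mm_im]; linarith)
    constructor <;> linarith

lemma hA2cast : ((A:ℂ)^2) = ((A^2 : ℝ):ℂ) := by push_cast; ring

lemma csqrt_Asq (hA : 0 < A) : csqrt ((A:ℂ)^2) = (A:ℂ) := by
  rw [hA2cast, csqrt]
  rw [show ((1:ℂ)/2) = (((1/2:ℝ)):ℂ) by norm_num, ← Complex.ofReal_cpow (sq_nonneg A)]
  rw [← Real.sqrt_eq_rpow, Real.sqrt_sq hA.le]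

lemma qq_eq_csqrt (hA : 0 < A) (hU : l ∈ UU A) :
    qq A l = csqrt ((A:ℂ)^2 * (ee A l * mm A l)) := by
  rw [csqrt, mulCpow (x := (A:ℂ)^2) ?h1 (em_ne hA hU) ?h2, ← csqrt, ← csqrt, csqrt_Asq hA, qq]
  case h1 => exact pow_ne_zero _ (Complex.ofReal_ne_zero.mpr hA.ne')
  case h2 =>
    rw [hA2cast, Complex.arg_ofReal_of_nonneg (sq_nonneg A), zero_add]
    exact ⟨Complex.neg_pi_lt_arg _, Complex.arg_le_pi _⟩

lemma csqrt_qq (hA : 0 < A) (hU : l ∈ UU A) :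
    csqrt (qq A l) = gam A l * ett A l := by
  rw [qq_eq_csqrt hA hU, csqrt_csqrt,
    show (A:ℂ)^2 * (ee A l * mm A l) = ((A:ℂ)^2 * mm A l) * ee A l by ring,
    mulCpow ?h1 (ee_ne hA hU) ?h2]
  case h1 => exact mul_ne_zero (pow_ne_zero _ (Complex.ofReal_ne_zero.mpr hA.ne')) (mm_ne hA hU)
  case h2 =>
    rw [hA2cast, Complex.arg_real_mul _ (by positivity : (0:ℝ) < A^2)]
    exact arg_add_mem hA hU
  rfl

lemma qq_decomp (hA : 0 < A) (hU : l ∈ UU A) :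
    qq A l = gam A l ^ 2 * ett A l ^ 2 := by
  have h := sq_csqrt (qq A l)
  rw [csqrt_qq hA hU] at h
  rw [← h]; ring

noncomputable def sig (A : ℝ) (l : ℂ) : ℂ :=
  ((Real.sqrt 2 : ℝ):ℂ)⁻¹ * sB (1/(Complex.I * (A:ℂ) * kA A l) - 1)
noncomputable def dd (A : ℝ) (l : ℂ) : ℂ :=
  l * (A:ℂ) / (1 - Complex.I * (A:ℂ) * kA A l)
noncomputable def cc (A : ℝ) (l : ℂ) : ℂ :=
  Complex.I / (((Real.sqrt 2:ℝ):ℂ) * aA A * ett A l)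

lemma ikA (A : ℝ) (l : ℂ) : Complex.I * (A:ℂ) * kA A l = -qq A l := by
  rw [kA, show 1/(A:ℂ)^2 - l^2 = ee A l * mm A l from by rw [ee, mm]; ring, qq]
  linear_combination (A:ℂ) * csqrt (ee A l * mm A l) * Complex.I_sq

lemma qq_re_pos (hA : 0 < A) (hU : l ∈ UU A) : 0 < (qq A l).re := by
  rw [qq, Complex.re_ofReal_mul]
  exact mul_pos hA (re_csqrt_pos (em_slit hA hU))

lemma qq_ne (hA : 0 < A) (hU : l ∈ UU A) : qq A l ≠ 0 :=
  fun h => by simpa [h] using qq_re_pos hA hU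

lemma one_qq_re (hA : 0 < A) (hU : l ∈ UU A) : 0 < (1 + qq A l).re := by
  rw [Complex.add_re, Complex.one_re]
  linarith [qq_re_pos hA hU]

lemma one_qq_ne (hA : 0 < A) (hU : l ∈ UU A) : 1 + qq A l ≠ 0 :=
  fun h => by simpa [h] using one_qq_re hA hU

lemma sigma_eq (hA : 0 < A) (hU : l ∈ UU A) :
    sig A l = ((Real.sqrt 2 : ℝ):ℂ)⁻¹ * (Complex.I * (ssf A l * (gam A l * ett A l)⁻¹)) := by
  have hq := qq_ne hA hU
  have hinv : csqrt ((qq A l)⁻¹) = (csqrt (qq A l))⁻¹ := by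
    rw [csqrt, csqrt]
    refine Complex.inv_cpow _ _ (fun h => ?_)
    have := Complex.arg_eq_pi_iff.mp h
    linarith [qq_re_pos hA hU, this.1]
  rw [sig, sB, ikA, show -(1/(-qq A l) - 1) = (1 + qq A l) * (qq A l)⁻¹ from by
    rw [add_mul, one_mul, mul_inv_cancel₀ hq, div_neg]; ring]
  rw [csqrt, mulCpow (one_qq_ne hA hU) (inv_ne_zero hq) ?harg, ← csqrt, ← csqrt, ← ssf]
  rw [hinv, csqrt_qq hA hU]
  case harg =>
    have h1 : |Complex.arg (1 + qq A l)| < Real.pi/2 :=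
      Complex.abs_arg_lt_pi_div_two_iff.mpr (Or.inl (one_qq_re hA hU))
    have h2 : |Complex.arg (qq A l)⁻¹| < Real.pi/2 := by
      refine Complex.abs_arg_lt_pi_div_two_iff.mpr (Or.inl ?_)
      rw [Complex.inv_re]
      exact div_pos (qq_re_pos hA hU) (Complex.normSq_pos.mpr (qq_ne hA hU))
    have h3 := abs_lt.mp h1
    have h4 := abs_lt.mp h2
    exact ⟨by linarith, by linarith⟩

lemma dd_eq (A : ℝ) (l : ℂ) : dd A l = l * (A:ℂ) / (1 + qq A l) := by
  rw [dd, ikA, sub_neg_eq_add]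

noncomputable def ssum (A : ℝ) (l : ℂ) : ℂ :=
  aA A^3 + aA A^2 * gam A l + aA A * gam A l^2 + gam A l^3
noncomputable def PP (A : ℝ) (l : ℂ) : ℂ :=
  aA A * gam A l^2/(ssf A l + 1) + (A:ℂ)^2 * ett A l^2 * (ssum A l)⁻¹
noncomputable def N1 (A : ℝ) (l : ℂ) : ℂ :=
  ((Real.sqrt 2:ℝ):ℂ)⁻¹ * Complex.I * PP A l / (gam A l * aA A)
noncomputable def N2 (A : ℝ) (l : ℂ) : ℂ :=
  -(((Real.sqrt 2:ℝ):ℂ)⁻¹ * Complex.I * ssf A l * ((A:ℂ)*ett A l^2 + gam A l^2)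
      /((1 + qq A l)*gam A l))

lemma eta4 (A : ℝ) (l : ℂ) : ett A l ^ (4:ℕ) = ee A l := pow4_quarter _
lemma gam4 (A : ℝ) (l : ℂ) : gam A l ^ (4:ℕ) = (A:ℂ)^2 * mm A l := pow4_quarter _

lemma eta_ne (hA : 0 < A) (hU : l ∈ UU A) : ett A l ≠ 0 := by
  intro h
  exact ee_ne hA hU (by rw [← eta4 A l, h]; simp)

lemma gam_ne (hA : 0 < A) (hU : l ∈ UU A) : gam A l ≠ 0 := by
  intro h
  have : (A:ℂ)^2 * mm A l = 0 := by rw [← gam4 A l, h]; simp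
  rcases mul_eq_zero.mp this with h' | h'
  · exact hA.ne' (by exact_mod_cast pow_eq_zero_iff (n := 2) (by norm_num) |>.mp h')
  · exact mm_ne hA hU h'

lemma aA4 (hA : 0 < A) : aA A ^ (4:ℕ) = 2*(A:ℂ) := by
  rw [aA, ← Complex.ofReal_pow, ← Real.rpow_natCast ((2*A) ^ ((1:ℝ)/4)) 4,
    ← Real.rpow_mul (by positivity)]
  norm_num

lemma aA_ne (hA : 0 < A) : aA A ≠ 0 := by
  rw [aA]
  exact_mod_cast (Real.rpow_pos_of_pos (by positivity) _).ne'

lemma sqrt2_ne : ((Real.sqrt 2:ℝ):ℂ) ≠ 0 := by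
  exact_mod_cast (Real.sqrt_pos.mpr (by norm_num : (0:ℝ) < 2)).ne'

lemma hAinv (hA : 0 < A) : (A:ℂ) * (1/(A:ℂ)) = 1 := by
  field_simp [Complex.ofReal_ne_zero.mpr hA.ne']

lemma hac (hA : 0 < A) (hU : l ∈ UU A) :
    (aA A - gam A l) * ssum A l = (A:ℂ)^2 * ee A l := by
  have h1 := aA4 (A := A) hA
  have h2 := gam4 A l
  rw [mm] at h2
  rw [ee, ssum]
  linear_combination h1 - h2 - 2*(A:ℂ)*(hAinv hA)

lemma ssf_sq (A : ℝ) (l : ℂ) : ssf A l ^ 2 = 1 + qq A l := sq_csqrt _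

lemma key_num (hA : 0 < A) (hU : l ∈ UU A) (hss1 : ssf A l + 1 ≠ 0) (hsum : ssum A l ≠ 0) :
    ssf A l * aA A - gam A l = ett A l^2 * PP A l := by
  have hs2 := ssf_sq A l
  have hq2 := qq_decomp hA hU
  have hc := hac hA hU
  have he4 := eta4 A l
  rw [PP]
  field_simp
  linear_combination (aA A * ssum A l) * hs2 + (aA A * ssum A l) * hq2 +
    (ssf A l + 1) * hc - (A:ℂ)^2*(ssf A l + 1) * he4

lemma key1 (hA : 0 < A) (hU : l ∈ UU A) (hss1 : ssf A l + 1 ≠ 0) (hsum : ssum A l ≠ 0) :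
    sig A l - cc A l = ett A l * N1 A l := by
  have hγ := gam_ne hA hU
  have hη := eta_ne hA hU
  have ha := aA_ne hA
  have hk := key_num hA hU hss1 hsum
  rw [cc, N1]
  calc sig A l - Complex.I / (((Real.sqrt 2:ℝ):ℂ) * aA A * ett A l)
      = ((Real.sqrt 2:ℝ):ℂ)⁻¹ * Complex.I *
        ((ssf A l * aA A - gam A l)/(gam A l * aA A * ett A l)) := by
        rw [sigma_eq hA hU]
        field_simp [sqrt2_ne, hγ, hη, ha]
    _ = ((Real.sqrt 2:ℝ):ℂ)⁻¹ * Complex.I *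
        ((ett A l^2 * PP A l)/(gam A l * aA A * ett A l)) := by rw [hk]
    _ = ett A l * (((Real.sqrt 2:ℝ):ℂ)⁻¹ * Complex.I * PP A l / (gam A l * aA A)) := by
        field_simp [sqrt2_ne, hγ, hη, ha]

lemma dd_sub_one (hA : 0 < A) (hU : l ∈ UU A) :
    dd A l - 1 = -(ett A l^2*((A:ℂ)*ett A l^2 + gam A l^2))/(1 + qq A l) := by
  have h1q := one_qq_ne hA hU
  have he4 := eta4 A l
  have hq2 := qq_decomp hA hU
  rw [ee] at he4
  rw [dd_eq]
  field_simp
  linear_combination (A:ℂ)*he4 - hq2 + hAinv hA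

lemma key2 (hA : 0 < A) (hU : l ∈ UU A) (hss1 : ssf A l + 1 ≠ 0) (hsum : ssum A l ≠ 0) :
    sig A l * dd A l - cc A l = ett A l * (N1 A l + N2 A l) := by
  have hγ := gam_ne hA hU
  have hη := eta_ne hA hU
  have ha := aA_ne hA
  have h1q := one_qq_ne hA hU
  have hstep : sig A l * (dd A l - 1) = ett A l * N2 A l := by
    rw [dd_sub_one hA hU, sigma_eq hA hU, N2]
    field_simp [sqrt2_ne, hγ, hη]
  have h1 := key1 hA hU hss1 hsum
  calc sig A l * dd A l - cc A l
      = (sig A l - cc A l) + sig A l * (dd A l - 1) := by ring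
    _ = ett A l * N1 A l + ett A l * N2 A l := by rw [h1, hstep]
    _ = ett A l * (N1 A l + N2 A l) := by ring

lemma tendsto_cpow_zero {α : Type*} {lf : Filter α} {f : α → ℂ}
    (hf : Tendsto f lf (nhds 0)) {r : ℝ} (hr : 0 < r) :
    Tendsto (fun x => f x ^ ((r:ℝ):ℂ)) lf (nhds 0) := by
  rw [tendsto_zero_iff_norm_tendsto_zero]
  have habs : Tendsto (fun x => ‖f x‖) lf (nhds 0) := by
    have := hf.norm
    simpa using this
  have h2 : Tendsto (fun x => ‖f x‖ ^ r) lf (nhds 0) := by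
    have := ((Real.continuousAt_rpow_const 0 r (Or.inr hr.le)).tendsto).comp habs
    simpa [Real.zero_rpow hr.ne', Function.comp_def] using this
  refine h2.congr fun x => ?_
  rw [absCpowReal _ _ hr.ne']

section Limits
variable (A : ℝ)

@[reducible] noncomputable def lpA (A : ℝ) : Filter ℂ := nhdsWithin (1/(A:ℂ)) {z : ℂ | z ∉ SigmaSet A}

lemma hU_mem (hA : 0 < A) : UU A ∈ lpA A := by
  have h1 : {z : ℂ | z ∉ SigmaSet A} ∈ lpA A := self_mem_nhdsWithin
  have h2 : Metric.ball (1/(A:ℂ)) (1/(2*A)) ∈ lpA A :=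
    nhdsWithin_le_nhds (Metric.ball_mem_nhds _ (by positivity))
  filter_upwards [h1, h2] with z hz1 hz2
  exact ⟨hz1, by rwa [Metric.mem_ball, Complex.dist_eq] at hz2⟩

lemma tend_ee (hA : 0 < A) : Tendsto (ee A) (lpA A) (nhds 0) := by
  rw [show (0:ℂ) = 1/(A:ℂ) - 1/(A:ℂ) by ring]
  exact ((continuous_const.sub continuous_id).tendsto _).mono_left nhdsWithin_le_nhds

lemma tend_A2m (hA : 0 < A) :
    Tendsto (fun l => (A:ℂ)^2 * mm A l) (lpA A) (nhds (2*(A:ℂ))) := by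
  have : Tendsto (fun l : ℂ => (A:ℂ)^2 * (1/(A:ℂ) + l)) (nhds (1/(A:ℂ)))
      (nhds ((A:ℂ)^2 * (1/(A:ℂ) + 1/(A:ℂ)))) :=
    (continuous_const.mul (continuous_const.add continuous_id)).tendsto _
  have hval : (A:ℂ)^2 * (1/(A:ℂ) + 1/(A:ℂ)) = 2*(A:ℂ) := by
    have : (A:ℂ) ≠ 0 := Complex.ofReal_ne_zero.mpr hA.ne'
    field_simp
    ring
  rw [hval] at this
  exact this.mono_left nhdsWithin_le_nhds

lemma aA_eq (hA : 0 < A) : aA A = (2*(A:ℂ)) ^ ((1:ℂ)/4) := by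
  rw [aA, Complex.ofReal_cpow (by positivity)]
  push_cast
  norm_num

lemma tend_gam (hA : 0 < A) : Tendsto (gam A) (lpA A) (nhds (aA A)) := by
  have hslit : (2*(A:ℂ)) ∈ Complex.slitPlane := by
    left; simp; positivity
  have hc := (continuousAt_cpow_const (a := 2*(A:ℂ)) (b := (1/4:ℂ)) hslit).tendsto
  have := hc.comp (tend_A2m A hA)
  rw [aA_eq A hA]
  exact this

lemma tend_eta (hA : 0 < A) : Tendsto (ett A) (lpA A) (nhds 0) := by
  have := tendsto_cpow_zero (tend_ee A hA) (r := 1/4) (by norm_num)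
  have heq : ∀ x : ℂ, ee A x ^ (((1/4:ℝ)):ℂ) = ett A x := fun x => by
    rw [ett]; norm_num
  exact this.congr heq

lemma tend_qq (hA : 0 < A) : Tendsto (qq A) (lpA A) (nhds 0) := by
  have hm : Tendsto (fun l => ee A l * mm A l) (lpA A) (nhds 0) := by
    have h2 : Tendsto (mm A) (lpA A) (nhds (1/(A:ℂ) + 1/(A:ℂ))) := by
      have : Tendsto (fun l : ℂ => 1/(A:ℂ) + l) (nhds (1/(A:ℂ))) (nhds (1/(A:ℂ) + 1/(A:ℂ))) :=
        (continuous_const.add continuous_id).tendsto _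
      exact this.mono_left nhdsWithin_le_nhds
    simpa using (tend_ee A hA).mul h2
  have := tendsto_cpow_zero hm (r := 1/2) (by norm_num)
  have heq : ∀ x : ℂ, ee A x * mm A x ^ (((1/2:ℝ)):ℂ) = ee A x * mm A x ^ ((1:ℂ)/2) := by
    intro x; norm_num
  have h3 : Tendsto (fun l => csqrt (ee A l * mm A l)) (lpA A) (nhds 0) := by
    refine this.congr fun x => ?_
    rw [csqrt]; norm_num
  have h4 := h3.const_mul (A:ℂ)
  rw [mul_zero] at h4
  exact h4

lemma tend_ssf (hA : 0 < A) : Tendsto (ssf A) (lpA A) (nhds 1) := by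
  have h1 : Tendsto (fun l => 1 + qq A l) (lpA A) (nhds 1) := by
    simpa using (tendsto_const_nhds (x := (1:ℂ)) (f := lpA A)).add (tend_qq A hA)
  have hslit : (1:ℂ) ∈ Complex.slitPlane := by left; simp
  have hc := (continuousAt_cpow_const (a := (1:ℂ)) (b := (1/2:ℂ)) hslit).tendsto
  have h2 := hc.comp h1
  rw [Complex.one_cpow] at h2
  exact h2

lemma tend_ssum (hA : 0 < A) : Tendsto (ssum A) (lpA A) (nhds (4 * aA A^3)) := by
  have hg := tend_gam A hA
  have : Tendsto (fun l => aA A^3 + aA A^2 * gam A l + aA A * gam A l^2 + gam A l^3)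
      (lpA A) (nhds (aA A^3 + aA A^2 * aA A + aA A * aA A^2 + aA A^3)) := by
    exact (((tendsto_const_nhds).add ((tendsto_const_nhds).mul hg)).add
      ((tendsto_const_nhds).mul (hg.pow 2))).add (hg.pow 3)
  have hval : aA A^3 + aA A^2 * aA A + aA A * aA A^2 + aA A^3 = 4 * aA A^3 := by ring
  rw [hval] at this
  exact this.congr fun x => by rw [ssum]

end Limits

lemma ssum_lim_ne (hA : 0 < A) : (4 : ℂ) * aA A^3 ≠ 0 := by
  exact mul_ne_zero (by norm_num) (pow_ne_zero _ (aA_ne hA))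

lemma ev_hss1 (hA : 0 < A) : ∀ᶠ l in lpA A, ssf A l + 1 ≠ 0 := by
  have h : Tendsto (fun l => ssf A l + 1) (lpA A) (nhds 2) := by
    have := (tend_ssf A hA).add (tendsto_const_nhds (x := (1:ℂ)))
    norm_num at this
    exact this
  exact h.eventually_ne (by norm_num)

lemma ev_hsum (hA : 0 < A) : ∀ᶠ l in lpA A, ssum A l ≠ 0 :=
  (tend_ssum A hA).eventually_ne (ssum_lim_ne hA)

lemma tend_N1 (hA : 0 < A) : ∃ L : ℂ, Tendsto (N1 A) (lpA A) (nhds L) := by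
  have hg := tend_gam A hA
  have hP : Tendsto (PP A) (lpA A)
      (nhds (aA A * aA A^2/(1+1) + (A:ℂ)^2 * 0^2 * ((4:ℂ) * aA A^3)⁻¹)) := by
    refine Tendsto.add ?_ ?_
    · exact ((tendsto_const_nhds.mul (hg.pow 2)).div
        ((tend_ssf A hA).add tendsto_const_nhds) (by norm_num))
    · exact (tendsto_const_nhds.mul ((tend_eta A hA).pow 2)).mul
        ((tend_ssum A hA).inv₀ (ssum_lim_ne hA))
  have hden : Tendsto (fun l => gam A l * aA A) (lpA A) (nhds (aA A * aA A)) :=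
    hg.mul tendsto_const_nhds
  have hden_ne : aA A * aA A ≠ 0 := mul_ne_zero (aA_ne hA) (aA_ne hA)
  have hnum : Tendsto (fun l => ((Real.sqrt 2:ℝ):ℂ)⁻¹ * Complex.I * PP A l) (lpA A)
      (nhds (((Real.sqrt 2:ℝ):ℂ)⁻¹ * Complex.I *
        (aA A * aA A^2/(1+1) + (A:ℂ)^2 * 0^2 * ((4:ℂ) * aA A^3)⁻¹))) :=
    tendsto_const_nhds.mul hP
  exact ⟨_, hnum.div hden hden_ne⟩

lemma tend_N2 (hA : 0 < A) : ∃ L : ℂ, Tendsto (N2 A) (lpA A) (nhds L) := by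
  have hg := tend_gam A hA
  have hnum : Tendsto (fun l => ((Real.sqrt 2:ℝ):ℂ)⁻¹ * Complex.I * ssf A l *
      ((A:ℂ)*ett A l^2 + gam A l^2)) (lpA A)
      (nhds (((Real.sqrt 2:ℝ):ℂ)⁻¹ * Complex.I * 1 * ((A:ℂ)*0^2 + aA A^2))) :=
    (tendsto_const_nhds.mul (tend_ssf A hA)).mul
      ((tendsto_const_nhds.mul ((tend_eta A hA).pow 2)).add (hg.pow 2))
  have hden : Tendsto (fun l => (1 + qq A l)*gam A l) (lpA A) (nhds (((1:ℂ)+0)*aA A)) :=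
    (tendsto_const_nhds.add (tend_qq A hA)).mul hg
  have hden_ne : ((1:ℂ)+0)*aA A ≠ 0 := by simpa using aA_ne hA
  exact ⟨_, (hnum.div hden hden_ne).neg⟩

lemma ett_isBigO (hA : 0 < A) :
    (fun l => ett A l) =O[lpA A] (fun l : ℂ => ‖l - 1/(A:ℂ)‖ ^ ((1:ℝ)/4)) := by
  rw [Asymptotics.isBigO_iff]
  refine ⟨1, Filter.Eventually.of_forall fun l => ?_⟩
  have h1 : ‖ett A l‖ = ‖ee A l‖ ^ ((1:ℝ)/4) := by
    rw [ett, show (1/4:ℂ) = (((1/4:ℝ)):ℂ) by norm_num,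
      absCpowReal _ _ (by norm_num)]
  have h2 : ‖ee A l‖ = ‖l - 1/(A:ℂ)‖ := by
    rw [ee, show (1/(A:ℂ) - l) = -(l - 1/(A:ℂ)) by ring, norm_neg]
  rw [h1, h2, one_mul, Real.norm_eq_abs]
  exact le_abs_self _

lemma ettN_bigO (hA : 0 < A) {N : ℂ → ℂ} {L : ℂ} (hN : Tendsto N (lpA A) (nhds L))
    {f : ℂ → ℂ} (hf : ∀ᶠ l in lpA A, f l = ett A l * N l) :
    f =O[lpA A] (fun l : ℂ => ‖l - 1/(A:ℂ)‖ ^ ((1:ℝ)/4)) := by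
  have h1 : (fun l => ett A l * N l) =O[lpA A]
      (fun l : ℂ => ‖l - 1/(A:ℂ)‖ ^ ((1:ℝ)/4) * 1) :=
    (ett_isBigO hA).mul (hN.isBigO_one ℝ)
  have h2 := h1.congr_right (fun x => mul_one _)
  exact (Filter.EventuallyEq.trans_isBigO hf h2 : _)

lemma scalar_bigO_1 (hA : 0 < A) :
    (fun l => sig A l - cc A l) =O[lpA A]
      (fun l : ℂ => ‖l - 1/(A:ℂ)‖ ^ ((1:ℝ)/4)) := by
  obtain ⟨L, hL⟩ := tend_N1 hA
  refine ettN_bigO hA hL ?_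
  filter_upwards [hU_mem A hA, ev_hss1 hA, ev_hsum hA] with l hU h1 h2
  exact key1 hA hU h1 h2

lemma scalar_bigO_2 (hA : 0 < A) :
    (fun l => sig A l * dd A l - cc A l) =O[lpA A]
      (fun l : ℂ => ‖l - 1/(A:ℂ)‖ ^ ((1:ℝ)/4)) := by
  obtain ⟨L1, hL1⟩ := tend_N1 hA
  obtain ⟨L2, hL2⟩ := tend_N2 hA
  refine ettN_bigO hA (hL1.add hL2) ?_
  filter_upwards [hU_mem A hA, ev_hss1 hA, ev_hsum hA] with l hU h1 h2
  exact key2 hA hU h1 h2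

lemma exp_pi_I_half : Complex.exp ((Real.pi:ℂ) * Complex.I / 2) = Complex.I := by
  rw [show (Real.pi:ℂ) * Complex.I / 2 = ((Real.pi/2 : ℝ):ℂ) * Complex.I by push_cast; ring,
    Complex.exp_mul_I, ← Complex.ofReal_cos, ← Complex.ofReal_sin,
    Real.cos_pi_div_two, Real.sin_pi_div_two]
  simp

lemma exp_three_quarters : Complex.exp (3 * (Real.pi:ℂ) * Complex.I / 4) =
    Complex.I * Complex.exp ((Real.pi:ℂ) * Complex.I / 4) := by
  rw [show 3 * (Real.pi:ℂ) * Complex.I / 4 =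
    (Real.pi:ℂ) * Complex.I / 2 + (Real.pi:ℂ) * Complex.I / 4 by ring,
    Complex.exp_add, exp_pi_I_half]

lemma EA_decomp (A : ℝ) (l : ℂ) : EA A l = sig A l • !![dd A l, 1; 1, dd A l] := rfl

lemma mdecomp (s d co : ℂ) :
    s • !![d, (1:ℂ); 1, d] - co • !![(1:ℂ), 1; 1, 1] =
      (s*d - co) • !![(1:ℂ), 0; 0, 1] + (s - co) • !![(0:ℂ), 1; 1, 0] := by
  ext i j
  fin_cases i <;> fin_cases j <;> simp [Matrix.smul_apply] <;> ring

lemma mdecomp2 (s d co : ℂ) :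
    s • !![-d, (1:ℂ); 1, -d] - co • !![(-1:ℂ), 1; 1, -1] =
      (-(s*d - co)) • !![(1:ℂ), 0; 0, 1] + (s - co) • !![(0:ℂ), 1; 1, 0] := by
  ext i j
  fin_cases i <;> fin_cases j <;> simp [Matrix.smul_apply] <;> ring

lemma smul_bigO {f : ℂ → ℂ} {g : ℂ → ℝ} {lf : Filter ℂ} (h : f =O[lf] g)
    (C : Matrix (Fin 2) (Fin 2) ℂ) : (fun x => f x • C) =O[lf] g := by
  rw [Asymptotics.isBigO_iff] at h ⊢
  obtain ⟨c, hc⟩ := h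
  refine ⟨c * ‖C‖, ?_⟩
  filter_upwards [hc] with x hx
  rw [norm_smul]
  calc ‖f x‖ * ‖C‖ ≤ c * ‖g x‖ * ‖C‖ := mul_le_mul_of_nonneg_right hx (norm_nonneg C)
    _ = c * ‖C‖ * ‖g x‖ := by ring

lemma ev_coef {A : ℝ} (hA : 0 < A) : ∀ᶠ l in lpA A,
    Complex.exp (3 * (Real.pi : ℂ) * Complex.I / 4) /
      (((Real.sqrt 2 : ℝ) : ℂ) * aA A * nuPlus A l) = cc A l := by
  filter_upwards [hU_mem A hA] with l hU
  have hη := eta_ne hA hU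
  have hexp : Complex.exp ((Real.pi:ℂ) * Complex.I / 4) ≠ 0 := Complex.exp_ne_zero _
  have hnu : nuPlus A l = Complex.exp ((Real.pi:ℂ) * Complex.I / 4) * ett A l := rfl
  rw [hnu, exp_three_quarters, cc]
  rw [show ((Real.sqrt 2:ℝ):ℂ) * aA A * (Complex.exp ((Real.pi:ℂ) * Complex.I / 4) * ett A l)
      = Complex.exp ((Real.pi:ℂ) * Complex.I / 4) * (((Real.sqrt 2:ℝ):ℂ) * aA A * ett A l) by ring,
    mul_comm Complex.I (Complex.exp ((Real.pi:ℂ) * Complex.I / 4)),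
    mul_div_mul_left _ _ hexp]

lemma part1 {A : ℝ} (hA : 0 < A) :
    (fun l : ℂ => EA A l -
        (Complex.exp (3 * (Real.pi : ℂ) * Complex.I / 4) /
          (((Real.sqrt 2 : ℝ) : ℂ) * (((2*A) ^ ((1:ℝ)/4) : ℝ) : ℂ) * nuPlus A l)) •
          !![(1:ℂ), 1; 1, 1])
      =O[lpA A] (fun l : ℂ => ‖l - 1/(A:ℂ)‖ ^ ((1:ℝ)/4)) := by
  have heq : ∀ᶠ l in lpA A, (EA A l -
      (Complex.exp (3 * (Real.pi : ℂ) * Complex.I / 4) /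
        (((Real.sqrt 2 : ℝ) : ℂ) * (((2*A) ^ ((1:ℝ)/4) : ℝ) : ℂ) * nuPlus A l)) •
        !![(1:ℂ), 1; 1, 1]) =
      (sig A l * dd A l - cc A l) • !![(1:ℂ), 0; 0, 1] +
        (sig A l - cc A l) • !![(0:ℂ), 1; 1, 0] := by
    filter_upwards [ev_coef hA] with l hco
    rw [EA_decomp, show (((2*A) ^ ((1:ℝ)/4) : ℝ) : ℂ) = aA A from rfl, hco, mdecomp]
  refine Filter.EventuallyEq.trans_isBigO heq ?_
  exact (smul_bigO (scalar_bigO_2 hA) _).add (smul_bigO (scalar_bigO_1 hA) _)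

lemma neg_mem_sigma {A : ℝ} {z : ℂ} (h : z ∈ SigmaSet A) : -z ∈ SigmaSet A := by
  obtain ⟨x, hx, rfl⟩ := h
  refine ⟨-x, ?_, by push_cast; ring⟩
  rcases hx with h1 | h1
  · exact Or.inr (by simp at h1 ⊢; linarith)
  · exact Or.inl (by simp at h1 ⊢; linarith)

lemma tendsto_neg_lp {A : ℝ} (hA : 0 < A) :
    Tendsto (fun z : ℂ => -z) (nhdsWithin (-(1/(A:ℂ))) {z : ℂ | z ∉ SigmaSet A}) (lpA A) := by
  refine tendsto_nhdsWithin_of_tendsto_nhds_of_eventually_within _ ?_ ?_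
  · have : Tendsto (fun z : ℂ => -z) (nhds (-(1/(A:ℂ)))) (nhds (-(-(1/(A:ℂ))))) :=
      continuous_neg.tendsto _
    rw [neg_neg] at this
    exact this.mono_left nhdsWithin_le_nhds
  · filter_upwards [self_mem_nhdsWithin] with z hz
    intro hc
    exact hz (by simpa using neg_mem_sigma hc)

lemma kA_neg (A : ℝ) (z : ℂ) : kA A (-z) = kA A z := by
  rw [kA, kA]
  congr 2
  ring

lemma sig_neg (A : ℝ) (z : ℂ) : sig A (-z) = sig A z := by
  rw [sig, sig, kA_neg]

lemma dd_neg (A : ℝ) (z : ℂ) : dd A (-z) = -dd A z := by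
  rw [dd, dd, kA_neg, neg_mul, neg_div]

lemma nuMinus_neg (A : ℝ) (z : ℂ) : nuMinus A (-z) = ett A z := by
  rw [nuMinus, ett, ee]
  congr 1
  ring

lemma part2 {A : ℝ} (hA : 0 < A) :
    (fun l : ℂ => EA A l -
        (Complex.I /
          (((Real.sqrt 2 : ℝ) : ℂ) * (((2*A) ^ ((1:ℝ)/4) : ℝ) : ℂ) * nuMinus A l)) •
          !![(-1:ℂ), 1; 1, -1])
      =O[nhdsWithin (-(1/(A:ℂ))) {z : ℂ | z ∉ SigmaSet A}]
        (fun l : ℂ => ‖l + 1/(A:ℂ)‖ ^ ((1:ℝ)/4)) := by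
  have h1 : (fun z : ℂ => EA A (-z) -
      (Complex.I /
        (((Real.sqrt 2 : ℝ) : ℂ) * (((2*A) ^ ((1:ℝ)/4) : ℝ) : ℂ) * nuMinus A (-z))) •
        !![(-1:ℂ), 1; 1, -1])
      =O[lpA A] (fun l : ℂ => ‖l - 1/(A:ℂ)‖ ^ ((1:ℝ)/4)) := by
    have heq : ∀ z : ℂ, (EA A (-z) -
        (Complex.I /
          (((Real.sqrt 2 : ℝ) : ℂ) * (((2*A) ^ ((1:ℝ)/4) : ℝ) : ℂ) * nuMinus A (-z))) •
          !![(-1:ℂ), 1; 1, -1]) =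
        (-(sig A z * dd A z - cc A z)) • !![(1:ℂ), 0; 0, 1] +
          (sig A z - cc A z) • !![(0:ℂ), 1; 1, 0] := by
      intro z
      rw [EA_decomp, sig_neg, dd_neg, nuMinus_neg,
        show (((2*A) ^ ((1:ℝ)/4) : ℝ) : ℂ) = aA A from rfl, ← cc, mdecomp2]
    refine Filter.EventuallyEq.trans_isBigO (Filter.Eventually.of_forall heq) ?_
    exact (smul_bigO (scalar_bigO_2 hA).neg_left _).add (smul_bigO (scalar_bigO_1 hA) _)
  have h2 := h1.comp_tendsto (tendsto_neg_lp hA)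
  refine (h2.congr' ?_ ?_ : _)
  · refine Filter.Eventually.of_forall fun z => ?_
    simp only [Function.comp_apply, neg_neg]
  · refine Filter.Eventually.of_forall fun z => ?_
    simp only [Function.comp_apply]
    rw [show -z - 1/(A:ℂ) = -(z + 1/(A:ℂ)) by ring, norm_neg]

end Aux

/-- E_A has fourth-root singularities at the branch points ±1/A,
with the stated leading behaviour. -/
theorem stmt_12 (A : ℝ) (hA : 0 < A) :
    ((fun l : ℂ => EA A l -
        (Complex.exp (3 * (Real.pi : ℂ) * Complex.I / 4) /
          (((Real.sqrt 2 : ℝ) : ℂ) * (((2*A) ^ ((1:ℝ)/4) : ℝ) : ℂ) * nuPlus A l)) •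
          !![(1:ℂ), 1; 1, 1])
      =O[nhdsWithin (1/(A:ℂ)) {z : ℂ | z ∉ SigmaSet A}]
        (fun l : ℂ => ‖l - 1/(A:ℂ)‖ ^ ((1:ℝ)/4))) ∧
    ((fun l : ℂ => EA A l -
        (Complex.I /
          (((Real.sqrt 2 : ℝ) : ℂ) * (((2*A) ^ ((1:ℝ)/4) : ℝ) : ℂ) * nuMinus A l)) •
          !![(-1:ℂ), 1; 1, -1])
      =O[nhdsWithin (-(1/(A:ℂ))) {z : ℂ | z ∉ SigmaSet A}]
        (fun l : ℂ => ‖l + 1/(A:ℂ)‖ ^ ((1:ℝ)/4))) :=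
  ⟨part1 hA, part2 hA⟩
end

section
/- Let A₁, A₂ ∈ ℝ and let m : ℝ → ℝ be continuous and bounded with m(x) → A₁ as x → −∞, m(x) → A₂ as x → +∞, m − A₁ integrable on (−∞, 0], and m − A₂ integrable on [0, ∞). Define v(x) := (A₁ + A₂)/2 + ∫_{−∞}^x e^{−(x−ξ)}·(m(ξ) − A₁)/2 dξ + ∫_x^∞ e^{x−ξ}·(m(ξ) − A₂)/2 dξ. Then v is twice continuously differentiable, v(x) − v''(x) = m(x) for all x ∈ ℝ, v(x) → A₁ as x → −∞, v(x) → A₂ as x → +∞, and v'(x) → 0 as x → ±∞; moreover v'(x) = (A₂ − A₁)/2 − ∫_{−∞}^x e^{−(x−ξ)}·(m(ξ) − A₁)/2 dξ + ∫_x^∞ e^{x−ξ}·(m(ξ) − A₂)/2 dξ. -/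
open MeasureTheory Filter

lemma stmt13_shift_Ioi (h : ℝ → ℝ) (x : ℝ) :
    (∫ ξ in Set.Ioi x, h ξ) = ∫ u in Set.Ioi (0:ℝ), h (x + u) := by
  rw [← integral_indicator measurableSet_Ioi, ← integral_indicator measurableSet_Ioi,
    ← integral_add_left_eq_self (fun w => (Set.Ioi x).indicator h w) x]
  congr 1
  ext u
  by_cases hu : 0 < u <;>
    simp [Set.indicator_apply, Set.mem_Ioi, hu, lt_add_iff_pos_right]

lemma stmt13_shift_Iio (h : ℝ → ℝ) (x : ℝ) :
    (∫ ξ in Set.Iio x, h ξ) = ∫ u in Set.Ioi (0:ℝ), h (x - u) := by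
  rw [← integral_indicator measurableSet_Iio, ← integral_indicator measurableSet_Ioi,
    ← integral_sub_left_eq_self (fun w => (Set.Iio x).indicator h w) volume x]
  congr 1
  ext u
  by_cases hu : 0 < u <;>
    simp [Set.indicator_apply, Set.mem_Ioi, Set.mem_Iio, hu, sub_lt_self_iff]

lemma stmt13_conv_limit (h : ℝ → ℝ) (C L : ℝ) (hbd : ∀ x, |h x| ≤ C) (hcont : Continuous h)
    (l : Filter ℝ) [l.IsCountablyGenerated]
    (τ : ℝ → ℝ → ℝ) (hτc : ∀ x, Continuous (fun u => τ x u))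
    (hτ : ∀ u : ℝ, Tendsto (fun x => h (τ x u)) l (nhds L)) :
    Tendsto (fun x => ∫ u in Set.Ioi (0:ℝ), Real.exp (-u) * h (τ x u) / 2) l
      (nhds (L / 2)) := by
  have hL : (L / 2) = ∫ u in Set.Ioi (0:ℝ), Real.exp (-u) * L / 2 := by
    have : (fun u : ℝ => Real.exp (-u) * L / 2) = fun u => Real.exp (-u) * (L / 2) := by
      ext u; ring
    rw [this, integral_mul_const, integral_exp_neg_Ioi_zero, one_mul]
  rw [hL]
  apply tendsto_integral_filter_of_dominated_convergence
    (bound := fun u => Real.exp (-u) * C / 2)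
  · filter_upwards with x
    exact ((Real.continuous_exp.comp continuous_neg).mul
      (hcont.comp (hτc x))).div_const 2 |>.aestronglyMeasurable
  · filter_upwards with x
    filter_upwards with u
    rw [Real.norm_eq_abs, abs_div, abs_mul, abs_of_pos (Real.exp_pos _), abs_two]
    gcongr
    exact hbd _
  · have : IntegrableOn (fun u : ℝ => Real.exp (-1 * u)) (Set.Ioi 0) := by
      exact exp_neg_integrableOn_Ioi 0 one_pos
    have h2 : IntegrableOn (fun u : ℝ => Real.exp (-u) * C / 2) (Set.Ioi 0) := by
      have h3 := (this.mul_const C).div_const 2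
      simp only [neg_one_mul] at h3
      exact h3
    exact h2
  · filter_upwards with u
    exact ((hτ u).const_mul _).div_const 2

lemma stmt13_fint (m : ℝ → ℝ) (A1 : ℝ) (hmc : Continuous m)
    (hi1 : IntegrableOn (fun x => m x - A1) (Set.Iic 0)) (b : ℝ) :
    IntegrableOn (fun ξ => Real.exp ξ * (m ξ - A1) / 2) (Set.Iic b) := by
  have hc : Continuous (fun ξ => Real.exp ξ * (m ξ - A1) / 2) :=
    (Real.continuous_exp.mul (hmc.sub continuous_const)).div_const 2
  have h0 : IntegrableOn (fun ξ => Real.exp ξ * (m ξ - A1) / 2) (Set.Iic 0) := by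
    apply Integrable.mono' hi1.norm (hc.aestronglyMeasurable.restrict)
    filter_upwards [self_mem_ae_restrict measurableSet_Iic] with ξ hξ
    rw [Real.norm_eq_abs, Real.norm_eq_abs, abs_div, abs_mul,
      abs_of_pos (Real.exp_pos _), abs_two]
    have h1 : Real.exp ξ ≤ 1 := Real.exp_le_one_iff.mpr hξ
    have h2 : (0:ℝ) ≤ |m ξ - A1| := abs_nonneg _
    nlinarith [Real.exp_pos ξ]
  have hcc : IntegrableOn (fun ξ => Real.exp ξ * (m ξ - A1) / 2) (Set.Icc 0 b) :=
    hc.integrableOn_Icc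
  apply (h0.union hcc).mono_set
  intro ξ hξ
  rcases le_or_gt ξ 0 with hl | hl
  · exact Or.inl hl
  · exact Or.inr ⟨hl.le, hξ⟩

lemma stmt13_gint (m : ℝ → ℝ) (A2 : ℝ) (hmc : Continuous m)
    (hi2 : IntegrableOn (fun x => m x - A2) (Set.Ici 0)) (a : ℝ) :
    IntegrableOn (fun ξ => Real.exp (-ξ) * (m ξ - A2) / 2) (Set.Ici a) := by
  have hc : Continuous (fun ξ => Real.exp (-ξ) * (m ξ - A2) / 2) :=
    ((Real.continuous_exp.comp continuous_neg).mul (hmc.sub continuous_const)).div_const 2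
  have h0 : IntegrableOn (fun ξ => Real.exp (-ξ) * (m ξ - A2) / 2) (Set.Ici 0) := by
    apply Integrable.mono' hi2.norm (hc.aestronglyMeasurable.restrict)
    filter_upwards [self_mem_ae_restrict measurableSet_Ici] with ξ hξ
    rw [Real.norm_eq_abs, Real.norm_eq_abs, abs_div, abs_mul,
      abs_of_pos (Real.exp_pos _), abs_two]
    have h1 : Real.exp (-ξ) ≤ 1 := Real.exp_le_one_iff.mpr (neg_nonpos.mpr (Set.mem_Ici.mp hξ))
    have h2 : (0:ℝ) ≤ |m ξ - A2| := abs_nonneg _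
    nlinarith [Real.exp_pos (-ξ)]
  have hcc : IntegrableOn (fun ξ => Real.exp (-ξ) * (m ξ - A2) / 2) (Set.Icc a 0) :=
    hc.integrableOn_Icc
  apply (hcc.union h0).mono_set
  intro ξ hξ
  rcases le_or_gt ξ 0 with hl | hl
  · exact Or.inl ⟨hξ, hl⟩
  · exact Or.inr hl.le

lemma stmt13_Ioi_add (g : ℝ → ℝ) (hg : ∀ a : ℝ, IntegrableOn g (Set.Ici a)) {a b : ℝ}
    (hab : a ≤ b) :
    (∫ ξ in Set.Ioi a, g ξ) = (∫ t in a..b, g t) + ∫ ξ in Set.Ioi b, g ξ := by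
  have h1 : IntegrableOn g (Set.Ioc a b) := (hg a).mono_set (fun x hx => hx.1.le)
  have h2 : IntegrableOn g (Set.Ioi b) := (hg b).mono_set Set.Ioi_subset_Ici_self
  have hdisj : Disjoint (Set.Ioc a b) (Set.Ioi b) := by
    apply Set.disjoint_left.mpr
    intro x hx1 hx2
    exact absurd hx1.2 (not_le.mpr hx2)
  rw [intervalIntegral.integral_of_le hab,
    ← setIntegral_union hdisj measurableSet_Ioi h1 h2, Set.Ioc_union_Ioi_eq_Ioi hab]

lemma stmt13_Ioi_split (g : ℝ → ℝ) (hg : ∀ a : ℝ, IntegrableOn g (Set.Ici a)) (x : ℝ) :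
    (∫ ξ in Set.Ioi x, g ξ) = (∫ ξ in Set.Ioi 0, g ξ) - ∫ t in (0:ℝ)..x, g t := by
  rcases le_total 0 x with h | h
  · have := stmt13_Ioi_add g hg h
    linarith
  · have := stmt13_Ioi_add g hg h
    rw [intervalIntegral.integral_symm] at this
    linarith

lemma stmt13_Iio_split (f : ℝ → ℝ) (hf : ∀ b : ℝ, IntegrableOn f (Set.Iic b)) (x : ℝ) :
    (∫ ξ in Set.Iio x, f ξ) = (∫ ξ in Set.Iio 0, f ξ) + ∫ t in (0:ℝ)..x, f t := by
  have h := intervalIntegral.integral_Iic_sub_Iic (hf 0) (hf x)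
  rw [integral_Iic_eq_integral_Iio, integral_Iic_eq_integral_Iio] at h
  linarith

/-- Green's function inversion of 1 − d²/dx² on functions
approaching A₁ at −∞ and A₂ at +∞. -/
theorem stmt_13 (A1 A2 : ℝ) (m : ℝ → ℝ)
    (hmc : Continuous m) (hmb : ∃ C, ∀ x, |m x| ≤ C)
    (hm1 : Tendsto m atBot (nhds A1))
    (hm2 : Tendsto m atTop (nhds A2))
    (hi1 : IntegrableOn (fun x => m x - A1) (Set.Iic 0))
    (hi2 : IntegrableOn (fun x => m x - A2) (Set.Ici 0))
    (v : ℝ → ℝ)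
    (hv : ∀ x, v x = (A1 + A2)/2
        + (∫ ξ in Set.Iio x, Real.exp (-(x - ξ)) * (m ξ - A1)/2)
        + (∫ ξ in Set.Ioi x, Real.exp (x - ξ) * (m ξ - A2)/2)) :
    ContDiff ℝ 2 v ∧
    (∀ x, v x - deriv (deriv v) x = m x) ∧
    Tendsto v atBot (nhds A1) ∧
    Tendsto v atTop (nhds A2) ∧
    Tendsto (deriv v) atBot (nhds 0) ∧
    Tendsto (deriv v) atTop (nhds 0) ∧
    (∀ x, deriv v x = (A2 - A1)/2
        - (∫ ξ in Set.Iio x, Real.exp (-(x - ξ)) * (m ξ - A1)/2)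
        + (∫ ξ in Set.Ioi x, Real.exp (x - ξ) * (m ξ - A2)/2)) := by
  obtain ⟨C, hC⟩ := hmb
  set f : ℝ → ℝ := fun ξ => Real.exp ξ * (m ξ - A1) / 2 with hf_def
  set g : ℝ → ℝ := fun ξ => Real.exp (-ξ) * (m ξ - A2) / 2 with hg_def
  have hfc : Continuous f := (Real.continuous_exp.mul (hmc.sub continuous_const)).div_const 2
  have hgc : Continuous g :=
    ((Real.continuous_exp.comp continuous_neg).mul (hmc.sub continuous_const)).div_const 2
  have hfi : ∀ b : ℝ, IntegrableOn f (Set.Iic b) := stmt13_fint m A1 hmc hi1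
  have hgi : ∀ a : ℝ, IntegrableOn g (Set.Ici a) := stmt13_gint m A2 hmc hi2
  set P0 : ℝ := ∫ ξ in Set.Iio (0:ℝ), f ξ with hP0_def
  set Q0 : ℝ := ∫ ξ in Set.Ioi (0:ℝ), g ξ with hQ0_def
  -- representation of the two integrals
  have hFrep : ∀ x : ℝ, (∫ ξ in Set.Iio x, Real.exp (-(x - ξ)) * (m ξ - A1)/2)
      = Real.exp (-x) * (P0 + ∫ t in (0:ℝ)..x, f t) := by
    intro x
    have h1 : (∫ ξ in Set.Iio x, Real.exp (-(x - ξ)) * (m ξ - A1)/2)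
        = Real.exp (-x) * ∫ ξ in Set.Iio x, f ξ := by
      rw [← integral_const_mul]
      apply integral_congr_ae
      filter_upwards with ξ
      rw [hf_def]
      rw [show -(x - ξ) = ξ + -x by ring, Real.exp_add]
      ring
    rw [h1, stmt13_Iio_split f hfi x]
  have hGrep : ∀ x : ℝ, (∫ ξ in Set.Ioi x, Real.exp (x - ξ) * (m ξ - A2)/2)
      = Real.exp x * (Q0 - ∫ t in (0:ℝ)..x, g t) := by
    intro x
    have h1 : (∫ ξ in Set.Ioi x, Real.exp (x - ξ) * (m ξ - A2)/2)
        = Real.exp x * ∫ ξ in Set.Ioi x, g ξ := by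
      rw [← integral_const_mul]
      apply integral_congr_ae
      filter_upwards with ξ
      rw [hg_def]
      rw [show x - ξ = x + -ξ by ring, Real.exp_add]
      ring
    rw [h1, stmt13_Ioi_split g hgi x]
  have hvV : ∀ x : ℝ, v x = (A1 + A2)/2
      + Real.exp (-x) * (P0 + ∫ t in (0:ℝ)..x, f t)
      + Real.exp x * (Q0 - ∫ t in (0:ℝ)..x, g t) := by
    intro x; rw [hv x, hFrep x, hGrep x]
  -- derivatives of the primitives
  have hI : ∀ x : ℝ, HasDerivAt (fun y => ∫ t in (0:ℝ)..y, f t) (f x) x := fun x =>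
    intervalIntegral.integral_hasDerivAt_right (hfc.intervalIntegrable 0 x)
      (hfc.stronglyMeasurableAtFilter volume (nhds x)) hfc.continuousAt
  have hJ : ∀ x : ℝ, HasDerivAt (fun y => ∫ t in (0:ℝ)..y, g t) (g x) x := fun x =>
    intervalIntegral.integral_hasDerivAt_right (hgc.intervalIntegrable 0 x)
      (hgc.stronglyMeasurableAtFilter volume (nhds x)) hgc.continuousAt
  have hexpneg : ∀ x : ℝ, HasDerivAt (fun y : ℝ => Real.exp (-y)) (-Real.exp (-x)) x := by
    intro x
    have := (hasDerivAt_neg x).exp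
    simpa using this
  have key1 : ∀ x : ℝ, Real.exp (-x) * f x = (m x - A1)/2 := by
    intro x
    rw [hf_def]
    simp only
    rw [Real.exp_neg]
    field_simp
    try ring
  have key2 : ∀ x : ℝ, Real.exp x * g x = (m x - A2)/2 := by
    intro x
    rw [hg_def]
    simp only
    rw [Real.exp_neg]
    field_simp
    try ring
  -- first derivative
  have hvd : ∀ x : ℝ, HasDerivAt v ((A2 - A1)/2
      - Real.exp (-x) * (P0 + ∫ t in (0:ℝ)..x, f t)
      + Real.exp x * (Q0 - ∫ t in (0:ℝ)..x, g t)) x := by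
    intro x
    have hveq : v = fun y => (A1 + A2)/2
        + Real.exp (-y) * (P0 + ∫ t in (0:ℝ)..y, f t)
        + Real.exp y * (Q0 - ∫ t in (0:ℝ)..y, g t) := funext hvV
    rw [hveq]
    have hadd : HasDerivAt (fun y => P0 + ∫ t in (0:ℝ)..y, f t) (f x) x := by
      exact (hI x).const_add P0
    have hsub : HasDerivAt (fun y => Q0 - ∫ t in (0:ℝ)..y, g t) (-(g x)) x := by
      exact (hJ x).const_sub Q0
    have term1 : HasDerivAt (fun y => Real.exp (-y) * (P0 + ∫ t in (0:ℝ)..y, f t))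
        (-Real.exp (-x) * (P0 + ∫ t in (0:ℝ)..x, f t) + Real.exp (-x) * f x) x :=
      (hexpneg x).mul hadd
    have term2 : HasDerivAt (fun y => Real.exp y * (Q0 - ∫ t in (0:ℝ)..y, g t))
        (Real.exp x * (Q0 - ∫ t in (0:ℝ)..x, g t) + Real.exp x * (-(g x))) x :=
      (Real.hasDerivAt_exp x).mul hsub
    have total := ((hasDerivAt_const x ((A1 + A2)/2)).add term1).add term2
    refine HasDerivAt.congr_deriv total ?_
    have k1 := key1 x
    have k2 := key2 x
    rw [mul_neg]
    linarith
  -- second derivative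
  have hWd : ∀ x : ℝ, HasDerivAt (fun y => (A2 - A1)/2
      - Real.exp (-y) * (P0 + ∫ t in (0:ℝ)..y, f t)
      + Real.exp y * (Q0 - ∫ t in (0:ℝ)..y, g t)) (v x - m x) x := by
    intro x
    have hadd : HasDerivAt (fun y => P0 + ∫ t in (0:ℝ)..y, f t) (f x) x := by
      exact (hI x).const_add P0
    have hsub : HasDerivAt (fun y => Q0 - ∫ t in (0:ℝ)..y, g t) (-(g x)) x := by
      exact (hJ x).const_sub Q0
    have term1 : HasDerivAt (fun y => Real.exp (-y) * (P0 + ∫ t in (0:ℝ)..y, f t))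
        (-Real.exp (-x) * (P0 + ∫ t in (0:ℝ)..x, f t) + Real.exp (-x) * f x) x :=
      (hexpneg x).mul hadd
    have term2 : HasDerivAt (fun y => Real.exp y * (Q0 - ∫ t in (0:ℝ)..y, g t))
        (Real.exp x * (Q0 - ∫ t in (0:ℝ)..x, g t) + Real.exp x * (-(g x))) x :=
      (Real.hasDerivAt_exp x).mul hsub
    have total := ((hasDerivAt_const x ((A2 - A1)/2)).sub term1).add term2
    refine HasDerivAt.congr_deriv total ?_
    have k1 := key1 x
    have k2 := key2 x
    have hvx := hvV x
    rw [mul_neg]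
    linarith
  have hderiv : ∀ x : ℝ, deriv v x = (A2 - A1)/2
      - Real.exp (-x) * (P0 + ∫ t in (0:ℝ)..x, f t)
      + Real.exp x * (Q0 - ∫ t in (0:ℝ)..x, g t) := fun x => (hvd x).deriv
  have hderivfun : deriv v = fun x => (A2 - A1)/2
      - Real.exp (-x) * (P0 + ∫ t in (0:ℝ)..x, f t)
      + Real.exp x * (Q0 - ∫ t in (0:ℝ)..x, g t) := funext hderiv
  have hderiv2 : ∀ x : ℝ, deriv (deriv v) x = v x - m x := by
    intro x
    rw [hderivfun]
    exact (hWd x).deriv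
  -- convolution representations
  have hFconv : ∀ x : ℝ, (∫ ξ in Set.Iio x, Real.exp (-(x - ξ)) * (m ξ - A1)/2)
      = ∫ u in Set.Ioi (0:ℝ), Real.exp (-u) * (m (x - u) - A1) / 2 := by
    intro x
    rw [stmt13_shift_Iio (fun ξ => Real.exp (-(x - ξ)) * (m ξ - A1)/2) x]
    apply integral_congr_ae
    filter_upwards with u
    rw [show -(x - (x - u)) = -u by ring]
  have hGconv : ∀ x : ℝ, (∫ ξ in Set.Ioi x, Real.exp (x - ξ) * (m ξ - A2)/2)
      = ∫ u in Set.Ioi (0:ℝ), Real.exp (-u) * (m (x + u) - A2) / 2 := by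
    intro x
    rw [stmt13_shift_Ioi (fun ξ => Real.exp (x - ξ) * (m ξ - A2)/2) x]
    apply integral_congr_ae
    filter_upwards with u
    rw [show x - (x + u) = -u by ring]
  have hCb : ∀ (A : ℝ) (x : ℝ), |m x - A| ≤ C + |A| := by
    intro A x
    calc |m x - A| ≤ |m x| + |A| := by
          rw [sub_eq_add_neg]
          exact (abs_add_le _ _).trans (by rw [abs_neg])
      _ ≤ C + |A| := by linarith [hC x]
  -- the four limits
  have hF_bot : Tendsto (fun x => ∫ ξ in Set.Iio x, Real.exp (-(x - ξ)) * (m ξ - A1)/2)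
      atBot (nhds 0) := by
    have h := stmt13_conv_limit (fun ξ => m ξ - A1) (C + |A1|) 0 (hCb A1)
      (hmc.sub continuous_const) atBot (fun x u => x - u)
      (fun x => continuous_const.sub continuous_id)
      (fun u => by
        have hx : Tendsto (fun x : ℝ => x - u) atBot atBot :=
          tendsto_atBot_add_const_right atBot (-u) tendsto_id
        simpa using (hm1.comp hx).sub_const A1)
    simp only [zero_div] at h
    exact Tendsto.congr (fun x => (hFconv x).symm) h
  have hF_top : Tendsto (fun x => ∫ ξ in Set.Iio x, Real.exp (-(x - ξ)) * (m ξ - A1)/2)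
      atTop (nhds ((A2 - A1)/2)) := by
    have h := stmt13_conv_limit (fun ξ => m ξ - A1) (C + |A1|) (A2 - A1) (hCb A1)
      (hmc.sub continuous_const) atTop (fun x u => x - u)
      (fun x => continuous_const.sub continuous_id)
      (fun u => by
        have hx : Tendsto (fun x : ℝ => x - u) atTop atTop :=
          tendsto_atTop_add_const_right atTop (-u) tendsto_id
        exact (hm2.comp hx).sub_const A1)
    exact Tendsto.congr (fun x => (hFconv x).symm) h
  have hG_bot : Tendsto (fun x => ∫ ξ in Set.Ioi x, Real.exp (x - ξ) * (m ξ - A2)/2)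
      atBot (nhds ((A1 - A2)/2)) := by
    have h := stmt13_conv_limit (fun ξ => m ξ - A2) (C + |A2|) (A1 - A2) (hCb A2)
      (hmc.sub continuous_const) atBot (fun x u => x + u)
      (fun x => continuous_const.add continuous_id)
      (fun u => by
        have hx : Tendsto (fun x : ℝ => x + u) atBot atBot :=
          tendsto_atBot_add_const_right atBot u tendsto_id
        exact (hm1.comp hx).sub_const A2)
    exact Tendsto.congr (fun x => (hGconv x).symm) h
  have hG_top : Tendsto (fun x => ∫ ξ in Set.Ioi x, Real.exp (x - ξ) * (m ξ - A2)/2)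
      atTop (nhds 0) := by
    have h := stmt13_conv_limit (fun ξ => m ξ - A2) (C + |A2|) 0 (hCb A2)
      (hmc.sub continuous_const) atTop (fun x u => x + u)
      (fun x => continuous_const.add continuous_id)
      (fun u => by
        have hx : Tendsto (fun x : ℝ => x + u) atTop atTop :=
          tendsto_atTop_add_const_right atTop u tendsto_id
        simpa using (hm2.comp hx).sub_const A2)
    simp only [zero_div] at h
    exact Tendsto.congr (fun x => (hGconv x).symm) h
  -- assemble
  refine ⟨?_, ?_, ?_, ?_, ?_, ?_, ?_⟩
  · -- ContDiff ℝ 2 v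
    rw [show (2 : WithTop ℕ∞) = 1 + 1 from by norm_num]
    refine contDiff_succ_iff_deriv.mpr ⟨fun x => (hvd x).differentiableAt, ?_, ?_⟩
    · intro h; exact absurd h (by simp)
    · rw [contDiff_one_iff_deriv]
      refine ⟨fun x => by rw [hderivfun]; exact (hWd x).differentiableAt, ?_⟩
      have : deriv (deriv v) = fun x => v x - m x := funext hderiv2
      rw [this]
      have hvdiff : Differentiable ℝ v := fun x => (hvd x).differentiableAt
      exact hvdiff.continuous.sub hmc
  · intro x
    rw [hderiv2 x]; ring
  · have hveq : v = fun x => (A1 + A2)/2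
        + (∫ ξ in Set.Iio x, Real.exp (-(x - ξ)) * (m ξ - A1)/2)
        + (∫ ξ in Set.Ioi x, Real.exp (x - ξ) * (m ξ - A2)/2) := funext hv
    rw [hveq]
    have h := ((tendsto_const_nhds : Tendsto (fun _ : ℝ => (A1+A2)/2) atBot (nhds ((A1+A2)/2))).add hF_bot).add hG_bot
    convert h using 2
    ring
  · have hveq : v = fun x => (A1 + A2)/2
        + (∫ ξ in Set.Iio x, Real.exp (-(x - ξ)) * (m ξ - A1)/2)
        + (∫ ξ in Set.Ioi x, Real.exp (x - ξ) * (m ξ - A2)/2) := funext hv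
    rw [hveq]
    have h := ((tendsto_const_nhds : Tendsto (fun _ : ℝ => (A1+A2)/2) atTop (nhds ((A1+A2)/2))).add hF_top).add hG_top
    convert h using 2
    ring
  · have hdveq : deriv v = fun x => (A2 - A1)/2
        - (∫ ξ in Set.Iio x, Real.exp (-(x - ξ)) * (m ξ - A1)/2)
        + (∫ ξ in Set.Ioi x, Real.exp (x - ξ) * (m ξ - A2)/2) :=
      funext fun x => by rw [hderiv x, hFrep x, hGrep x]
    rw [hdveq]
    have h := ((tendsto_const_nhds : Tendsto (fun _ : ℝ => (A2-A1)/2) atBot (nhds ((A2-A1)/2))).sub hF_bot).add hG_bot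
    convert h using 2
    ring
  · have hdveq : deriv v = fun x => (A2 - A1)/2
        - (∫ ξ in Set.Iio x, Real.exp (-(x - ξ)) * (m ξ - A1)/2)
        + (∫ ξ in Set.Ioi x, Real.exp (x - ξ) * (m ξ - A2)/2) :=
      funext fun x => by rw [hderiv x, hFrep x, hGrep x]
    rw [hdveq]
    have h := ((tendsto_const_nhds : Tendsto (fun _ : ℝ => (A2-A1)/2) atTop (nhds ((A2-A1)/2))).sub hF_top).add hG_top
    convert h using 2
    ring
  · intro x
    rw [hderiv x, hFrep x, hGrep x]
end

section
/- Let 0 < A₁ and 0 < A₂, and let u : ℝ → ℝ be twice continuously differentiable and bounded with u(x) → A₁ as x → −∞, u(x) → A₂ as x → +∞, and u'(x) → 0 as x → ±∞. Suppose m := u − u'' is continuous and bounded with m − A₁ integrable on (−∞, 0] and m − A₂ integrable on [0, ∞). Define a₁(x) := exp(−(1/(2A₂))·∫_x^∞ (m(ξ) − A₂) dξ), a₂(x) := (A₁/2 + ∫_{−∞}^x e^{−(x−ξ)}·(m(ξ) − A₁)/2 dξ)·a₁(x)^{−1}, and a₃(x) := (A₂/2 + ∫_x^∞ e^{x−ξ}·(m(ξ)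 − A₂)/2 dξ)·a₁(x). Then for every x ∈ ℝ: u(x) = a₁(x)·a₂(x) + a₁(x)^{−1}·a₃(x) and u'(x) = −a₁(x)·a₂(x) + a₁(x)^{−1}·a₃(x). -/
open MeasureTheory Filter

/-- recovery formulas for u and u' in terms of the coefficients
a₁, a₂, a₃ of the expansion at λ = 0 of the Riemann–Hilbert solution. -/
theorem stmt_14 (A1 A2 : ℝ) (hA1 : 0 < A1) (hA2 : 0 < A2)
    (u : ℝ → ℝ) (hu : ContDiff ℝ 2 u) (hub : ∃ C, ∀ x, |u x| ≤ C)
    (hu1 : Tendsto u atBot (nhds A1))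
    (hu2 : Tendsto u atTop (nhds A2))
    (hu'1 : Tendsto (deriv u) atBot (nhds 0))
    (hu'2 : Tendsto (deriv u) atTop (nhds 0))
    (m : ℝ → ℝ) (hm : ∀ x, m x = u x - deriv (deriv u) x)
    (hmc : Continuous m) (hmb : ∃ C, ∀ x, |m x| ≤ C)
    (hi1 : IntegrableOn (fun x => m x - A1) (Set.Iic 0))
    (hi2 : IntegrableOn (fun x => m x - A2) (Set.Ici 0))
    (a1 a2 a3 : ℝ → ℝ)
    (ha1 : ∀ x, a1 x = Real.exp (-(1/(2*A2)) * ∫ ξ in Set.Ioi x, (m ξ - A2)))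
    (ha2 : ∀ x, a2 x =
      (A1/2 + ∫ ξ in Set.Iio x, Real.exp (-(x - ξ)) * (m ξ - A1)/2) * (a1 x)⁻¹)
    (ha3 : ∀ x, a3 x =
      (A2/2 + ∫ ξ in Set.Ioi x, Real.exp (x - ξ) * (m ξ - A2)/2) * a1 x) :
    ∀ x, u x = a1 x * a2 x + (a1 x)⁻¹ * a3 x ∧
      deriv u x = -(a1 x * a2 x) + (a1 x)⁻¹ * a3 x := by
  have h2 : (2 : WithTop ℕ∞) = 1 + 1 := by norm_num
  rw [h2] at hu
  have hud : Differentiable ℝ u := hu.differentiable (by norm_num)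
  have h1 : ContDiff ℝ 1 (deriv u) := (contDiff_succ_iff_deriv.mp hu).2.2
  have hud' : Differentiable ℝ (deriv u) := h1.differentiable (by norm_num)
  intro x
  -- nonvanishing of a1
  have he : a1 x ≠ 0 := by rw [ha1]; exact (Real.exp_pos _).ne'
  -- integrability of m - A on half lines
  have hiA1 : IntegrableOn (fun ξ => m ξ - A1) (Set.Iic x) := by
    refine (hi1.union ((hmc.sub continuous_const).integrableOn_Icc (a := 0) (b := x))).mono_set ?_
    intro ξ hξ
    rcases le_or_gt ξ 0 with h | h
    · exact Or.inl h
    · exact Or.inr ⟨h.le, hξ⟩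
  have hiA2 : IntegrableOn (fun ξ => m ξ - A2) (Set.Ici x) := by
    refine (hi2.union ((hmc.sub continuous_const).integrableOn_Icc (a := x) (b := 0))).mono_set ?_
    intro ξ hξ
    rcases le_or_gt 0 ξ with h | h
    · exact Or.inl h
    · exact Or.inr ⟨hξ, h.le⟩
  -- FTC on (-∞, x]
  have key1 : (∫ ξ in Set.Iic x, Real.exp (ξ - x) * (m ξ - A1))
      = u x - deriv u x - A1 := by
    have hF : ∀ ξ ∈ Set.Iic x, HasDerivAt (fun ξ => Real.exp (ξ - x) * (u ξ - deriv u ξ - A1))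
        (Real.exp (ξ - x) * (m ξ - A1)) ξ := by
      intro ξ _
      have hexp : HasDerivAt (fun ξ => Real.exp (ξ - x)) (Real.exp (ξ - x)) ξ := by
        simpa using (((hasDerivAt_id ξ).sub_const x).exp)
      have hg : HasDerivAt (fun ξ => u ξ - deriv u ξ - A1)
          (deriv u ξ - deriv (deriv u) ξ) ξ :=
        (((hud ξ).hasDerivAt).sub ((hud' ξ).hasDerivAt)).sub_const A1
      have := hexp.mul hg
      exact this.congr_deriv (by rw [hm]; ring)
    have hint : IntegrableOn (fun ξ => Real.exp (ξ - x) * (m ξ - A1)) (Set.Iic x) := by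
      refine Integrable.mono' hiA1.abs
        ((((Real.continuous_exp.comp (continuous_id.sub continuous_const)).mul
          (hmc.sub continuous_const))).aestronglyMeasurable) ?_
      rw [ae_restrict_iff' measurableSet_Iic]
      filter_upwards with ξ hξ
      have h1 : Real.exp (ξ - x) ≤ 1 := Real.exp_le_one_iff.mpr (by linarith [hξ.out])
      have h0 : (0:ℝ) ≤ Real.exp (ξ - x) := (Real.exp_pos _).le
      rw [Real.norm_eq_abs, abs_mul, abs_of_nonneg h0]
      calc Real.exp (ξ - x) * |m ξ - A1| ≤ 1 * |m ξ - A1| :=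
            mul_le_mul_of_nonneg_right h1 (abs_nonneg _)
        _ = |m ξ - A1| := one_mul _
    have htend : Tendsto (fun ξ => Real.exp (ξ - x) * (u ξ - deriv u ξ - A1)) atBot (nhds 0) := by
      have hexp : Tendsto (fun ξ : ℝ => Real.exp (ξ - x)) atBot (nhds 0) :=
        Real.tendsto_exp_atBot.comp (by
          simpa [sub_eq_add_neg] using
            tendsto_atBot_add_const_right atBot (-x) (tendsto_id (α := ℝ)))
      have hrest : Tendsto (fun ξ => u ξ - deriv u ξ - A1) atBot (nhds 0) := by
        have := (hu1.sub hu'1).sub_const A1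
        simpa using this
      simpa using hexp.mul hrest
    have := integral_Iic_of_hasDerivAt_of_tendsto'
      (f := fun ξ => Real.exp (ξ - x) * (u ξ - deriv u ξ - A1)) hF hint htend
    simpa using this
  -- FTC on [x, ∞)
  have key2 : (∫ ξ in Set.Ioi x, Real.exp (x - ξ) * (m ξ - A2))
      = u x + deriv u x - A2 := by
    have hF : ∀ ξ ∈ Set.Ici x, HasDerivAt (fun ξ => -(Real.exp (x - ξ) * (u ξ + deriv u ξ - A2)))
        (Real.exp (x - ξ) * (m ξ - A2)) ξ := by
      intro ξ _
      have hexp : HasDerivAt (fun ξ => Real.exp (x - ξ)) (-Real.exp (x - ξ)) ξ := by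
        simpa using (((hasDerivAt_id ξ).const_sub x).exp)
      have hg : HasDerivAt (fun ξ => u ξ + deriv u ξ - A2)
          (deriv u ξ + deriv (deriv u) ξ) ξ :=
        (((hud ξ).hasDerivAt).add ((hud' ξ).hasDerivAt)).sub_const A2
      have := (hexp.mul hg).neg
      exact this.congr_deriv (by rw [hm]; ring)
    have hint : IntegrableOn (fun ξ => Real.exp (x - ξ) * (m ξ - A2)) (Set.Ioi x) := by
      refine (Integrable.mono' (hiA2.mono_set Set.Ioi_subset_Ici_self).abs
        ((((Real.continuous_exp.comp (continuous_const.sub continuous_id)).mul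
          (hmc.sub continuous_const))).aestronglyMeasurable) ?_)
      rw [ae_restrict_iff' measurableSet_Ioi]
      filter_upwards with ξ hξ
      have h1 : Real.exp (x - ξ) ≤ 1 := Real.exp_le_one_iff.mpr (by linarith [hξ.out])
      have h0 : (0:ℝ) ≤ Real.exp (x - ξ) := (Real.exp_pos _).le
      rw [Real.norm_eq_abs, abs_mul, abs_of_nonneg h0]
      calc Real.exp (x - ξ) * |m ξ - A2| ≤ 1 * |m ξ - A2| :=
            mul_le_mul_of_nonneg_right h1 (abs_nonneg _)
        _ = |m ξ - A2| := one_mul _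
    have htend : Tendsto (fun ξ => -(Real.exp (x - ξ) * (u ξ + deriv u ξ - A2))) atTop (nhds 0) := by
      have hexp : Tendsto (fun ξ : ℝ => Real.exp (x - ξ)) atTop (nhds 0) :=
        Real.tendsto_exp_atBot.comp (by
          exact (tendsto_atBot_add_const_left atTop x tendsto_neg_atTop_atBot).congr
            (fun ξ => (sub_eq_add_neg x ξ).symm))
      have hrest : Tendsto (fun ξ => u ξ + deriv u ξ - A2) atTop (nhds 0) := by
        have := (hu2.add hu'2).sub_const A2
        simpa using this
      simpa using (hexp.mul hrest).neg
    have := integral_Ioi_of_hasDerivAt_of_tendsto'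
      (f := fun ξ => -(Real.exp (x - ξ) * (u ξ + deriv u ξ - A2))) hF hint htend
    simpa using this
  -- rewrite the integrals appearing in a2, a3
  have e1 : (∫ ξ in Set.Iio x, Real.exp (-(x - ξ)) * (m ξ - A1)/2)
      = (u x - deriv u x - A1)/2 := by
    rw [← MeasureTheory.integral_Iic_eq_integral_Iio]
    simp only [neg_sub]
    rw [MeasureTheory.integral_div, key1]
  have e2 : (∫ ξ in Set.Ioi x, Real.exp (x - ξ) * (m ξ - A2)/2)
      = (u x + deriv u x - A2)/2 := by
    rw [MeasureTheory.integral_div, key2]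
  rw [ha2 x, ha3 x, e1, e2]
  constructor <;> field_simp <;> ring
end
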